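/- arXiv:1107.5190 — 9 statements merged into one kernel-verified Lean document; each statement's English description precedes it below -/
import Mathlib

section
/- Let M ≥ 0, δ ≥ 0, and let f : [0,1] → [0,∞) be a bounded measurable function satisfying f(s) ≤ δ + M ∫_0^s f(u)/√(s−u) du for every s ∈ [0,1]. Then f(s) ≤ δ(1 + 2M√s) e^{πM²s} for every s ∈ [0,1]. -/
open MeasureTheory Set intervalIntegral

set_option maxHeartbeats 1600000

/-! Auxiliary lemmas for the fractional Gronwall inequality. -/

lemma div_le_div_nonneg_denom {a b d : ℝ} (h : a ≤ b) (hd : 0 ≤ d) : a / d ≤ b / d := by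
  rcases hd.eq_or_lt with rfl | hd
  · simp
  · exact (div_le_div_iff_of_pos_right hd).mpr h

/-- Real Beta integral via the complex one. -/
lemma real_beta {a b : ℝ} (ha : 0 < a) (hb : 0 < b) :
    ∫ t in (0:ℝ)..1, t ^ (a-1) * (1-t) ^ (b-1) =
      Real.Gamma a * Real.Gamma b / Real.Gamma (a+b) := by
  have key : Complex.Gamma a * Complex.Gamma b
      = Complex.Gamma (a+b) * Complex.betaIntegral a b :=
    Complex.Gamma_mul_Gamma_eq_betaIntegral (by simpa using ha) (by simpa using hb)
  have hofReal : Complex.betaIntegral a b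
      = ((∫ t in (0:ℝ)..1, t ^ (a-1) * (1-t) ^ (b-1) : ℝ) : ℂ) := by
    rw [Complex.betaIntegral, ← intervalIntegral.integral_ofReal]
    refine intervalIntegral.integral_congr fun x hx => ?_
    rw [uIcc_of_le zero_le_one] at hx
    push_cast
    rw [Complex.ofReal_cpow hx.1, Complex.ofReal_cpow (by linarith [hx.2] : (0:ℝ) ≤ 1 - x)]
    push_cast
    ring
  rw [hofReal, ← Complex.ofReal_add, Complex.Gamma_ofReal, Complex.Gamma_ofReal,
    Complex.Gamma_ofReal, ← Complex.ofReal_mul, ← Complex.ofReal_mul] at key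
  have := Complex.ofReal_injective key
  have hpos : 0 < Real.Gamma (a+b) := Real.Gamma_pos_of_pos (by linarith)
  field_simp
  linarith [this]

lemma kernel_integrable {s : ℝ} (hs : 0 < s) {g : ℝ → ℝ} (hg : Measurable g)
    {K : ℝ} (hK : ∀ u ∈ Icc (0:ℝ) s, |g u| ≤ K) :
    IntervalIntegrable (fun u => g u / Real.sqrt (s - u)) volume 0 s := by
  have hker : IntervalIntegrable (fun u : ℝ => K * (s - u) ^ (-(1/2) : ℝ)) volume 0 s := by
    have h1 : IntervalIntegrable (fun x : ℝ => x ^ (-(1/2) : ℝ)) volume (s - 0) (s - s) :=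
      intervalIntegrable_rpow' (by norm_num)
    simpa using (h1.comp_sub_left s).const_mul K
  rw [intervalIntegrable_iff_integrableOn_Ioc_of_le hs.le] at hker ⊢
  refine hker.mono' ?_ ?_
  · exact (hg.div ((measurable_const.sub measurable_id).sqrt)).aestronglyMeasurable
  · filter_upwards [ae_restrict_mem measurableSet_Ioc] with u hu
    have h0 : (0:ℝ) ≤ s - u := by linarith [hu.2]
    rw [Real.norm_eq_abs, abs_div, abs_of_nonneg (Real.sqrt_nonneg _),
      Real.rpow_neg h0, ← Real.sqrt_eq_rpow, ← div_eq_mul_inv]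
    exact div_le_div_nonneg_denom (hK u ⟨hu.1.le, hu.2⟩) (Real.sqrt_nonneg _)

noncomputable def Ifun (k : ℕ) : ℝ := ∫ t in (0:ℝ)..1, (Real.sqrt t)^k / Real.sqrt (1 - t)

lemma Ifun_nonneg (k : ℕ) : 0 ≤ Ifun k := by
  refine intervalIntegral.integral_nonneg zero_le_one fun t _ => ?_
  positivity

lemma sqrt_pow_meas (k : ℕ) : Measurable fun u : ℝ => (Real.sqrt u)^k :=
  (Real.continuous_sqrt.measurable).pow_const k

lemma J_eq {s : ℝ} (hs : 0 < s) (k : ℕ) :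
    ∫ u in (0:ℝ)..s, (Real.sqrt u)^k / Real.sqrt (s - u)
      = (Real.sqrt s)^(k+1) * Ifun k := by
  have hcomp : ∀ t : ℝ, (Real.sqrt (s*t))^k / Real.sqrt (s - s*t)
      = ((Real.sqrt s)^k / Real.sqrt s) * ((Real.sqrt t)^k / Real.sqrt (1 - t)) := by
    intro t
    rw [show s - s*t = s*(1-t) by ring, Real.sqrt_mul hs.le, Real.sqrt_mul hs.le, mul_pow]
    rw [div_mul_div_comm]
  have hsub := intervalIntegral.integral_comp_mul_left
    (fun u => (Real.sqrt u)^k / Real.sqrt (s - u)) (a := 0) (b := 1) (ne_of_gt hs)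
  simp only [mul_zero, mul_one] at hsub
  have : ∫ t in (0:ℝ)..1, (Real.sqrt (s*t))^k / Real.sqrt (s - s*t)
      = ((Real.sqrt s)^k / Real.sqrt s) * Ifun k := by
    simp only [hcomp]
    rw [intervalIntegral.integral_const_mul]
    rfl
  rw [this] at hsub
  rw [smul_eq_mul] at hsub
  have h2 : ∫ u in (0:ℝ)..s, (Real.sqrt u)^k / Real.sqrt (s - u)
      = s * (((Real.sqrt s)^k / Real.sqrt s) * Ifun k) := by
    field_simp at hsub ⊢
    linarith [hsub]
  rw [h2, pow_succ]
  rw [show s * ((Real.sqrt s)^k / Real.sqrt s * Ifun k)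
      = (Real.sqrt s)^k * (s / Real.sqrt s) * Ifun k by ring, Real.div_sqrt]

lemma Ifun_eq (k : ℕ) : Ifun k
    = Real.Gamma ((k:ℝ)/2 + 1) * Real.Gamma (1/2) / Real.Gamma ((k:ℝ)/2 + 3/2) := by
  have h : Ifun k = ∫ t in (0:ℝ)..1, t ^ (((k:ℝ)/2 + 1) - 1) * (1-t) ^ ((1/2 : ℝ) - 1) := by
    refine intervalIntegral.integral_congr fun t ht => ?_
    rw [uIcc_of_le zero_le_one] at ht
    have h1 : (Real.sqrt t)^k = t ^ (((k:ℝ)/2 + 1) - 1) := by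
      rw [Real.sqrt_eq_rpow, ← Real.rpow_natCast (t ^ (1/(2:ℝ))) k, ← Real.rpow_mul ht.1]
      norm_num
      ring_nf
    have h2 : Real.sqrt (1 - t) = (1-t) ^ ((1:ℝ) - (1/2 : ℝ)) := by
      rw [Real.sqrt_eq_rpow]; norm_num
    rw [h1, h2, div_eq_mul_inv, ← Real.rpow_neg (by linarith [ht.2])]
    norm_num
  rw [h, real_beta (by positivity) (by norm_num)]
  norm_num
  ring_nf

lemma Ifun_prod (j : ℕ) : Ifun (2*j) * Ifun (2*j+1) = Real.pi / ((j:ℝ)+1) := by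
  have h32 : (0:ℝ) < (j:ℝ) + 3/2 := by positivity
  have hG32 := Real.Gamma_pos_of_pos h32
  have hfac : (0:ℝ) < (j:ℝ)+1 := by positivity
  rw [Ifun_eq, Ifun_eq]
  push_cast
  rw [show (2*(j:ℝ))/2 + 1 = (j:ℝ)+1 by ring, show (2*(j:ℝ))/2+3/2 = (j:ℝ)+3/2 by ring,
      show (2*(j:ℝ)+1)/2 + 1 = (j:ℝ)+3/2 by ring,
      show (2*(j:ℝ)+1)/2+3/2 = (((j+1:ℕ)):ℝ)+1 by push_cast; ring]
  rw [Real.Gamma_nat_eq_factorial, Real.Gamma_nat_eq_factorial, Real.Gamma_one_half_eq]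
  have hjf : ((j.factorial:ℝ)) ≠ 0 := by positivity
  rw [Nat.factorial_succ]
  push_cast
  field_simp
  ring_nf
  rw [Real.sq_sqrt Real.pi_pos.le]

lemma Ifun_zero : Ifun 0 = 2 := by
  rw [Ifun_eq]
  norm_num
  rw [show (3:ℝ)/2 = 1/2 + 1 by norm_num, Real.Gamma_add_one (by norm_num),
    Real.Gamma_one_half_eq]
  have : Real.sqrt Real.pi ≠ 0 := by positivity
  field_simp

lemma Ifun_even_le (j : ℕ) : Ifun (2*j) ≤ 2 := by
  rw [← Ifun_zero]
  refine intervalIntegral.integral_mono_on zero_le_one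
    (kernel_integrable one_pos (sqrt_pow_meas (2*j)) (K := 1) ?_)
    (kernel_integrable one_pos (sqrt_pow_meas 0) (K := 1) ?_) fun t ht => ?_
  · intro u hu
    rw [abs_of_nonneg (by positivity)]
    exact pow_le_one₀ (Real.sqrt_nonneg u) (Real.sqrt_le_one.mpr hu.2)
  · intro u hu; norm_num
  · refine div_le_div_nonneg_denom ?_ (Real.sqrt_nonneg _)
    rw [pow_zero]
    exact pow_le_one₀ (Real.sqrt_nonneg t) (Real.sqrt_le_one.mpr ht.2)

noncomputable def cseq (M : ℝ) : ℕ → ℝ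
  | 0 => 1
  | k+1 => M * Ifun k * cseq M k

lemma cseq_nonneg {M : ℝ} (hM : 0 ≤ M) (k : ℕ) : 0 ≤ cseq M k := by
  induction k with
  | zero => norm_num [cseq]
  | succ k ih => exact mul_nonneg (mul_nonneg hM (Ifun_nonneg k)) ih

lemma cseq_even {M : ℝ} (j : ℕ) :
    cseq M (2*j) = (Real.pi * M^2)^j / (j.factorial : ℝ) := by
  induction j with
  | zero => norm_num [cseq]
  | succ j ih =>
    have h1 : 2*(j+1) = (2*j+1)+1 := by ring
    have hj1 : ((j:ℝ)+1) ≠ 0 := by positivity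
    have hjf : ((j.factorial : ℕ):ℝ) ≠ 0 := by positivity
    rw [h1, cseq, cseq, ih, Nat.factorial_succ]
    push_cast
    calc M * Ifun (2*j+1) * (M * Ifun (2*j) * ((Real.pi*M^2)^j / (j.factorial:ℝ)))
        = (Ifun (2*j) * Ifun (2*j+1)) * (M^2 * (Real.pi*M^2)^j / (j.factorial:ℝ)) := by ring
      _ = (Real.pi/((j:ℝ)+1)) * (M^2 * (Real.pi*M^2)^j / (j.factorial:ℝ)) := by rw [Ifun_prod]
      _ = (Real.pi*M^2)^(j+1) / (((j:ℝ)+1) * (j.factorial:ℝ)) := by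
          rw [pow_succ]; field_simp; ring

lemma cseq_odd_le {M : ℝ} (hM : 0 ≤ M) (j : ℕ) :
    cseq M (2*j+1) ≤ 2 * M * (Real.pi * M^2)^j / (j.factorial : ℝ) := by
  rw [cseq, cseq_even]
  have h1 : M * Ifun (2*j) ≤ M * 2 :=
    mul_le_mul_of_nonneg_left (Ifun_even_le j) hM
  have h2 : (0:ℝ) ≤ (Real.pi * M^2)^j / (j.factorial : ℝ) := by positivity
  calc M * Ifun (2*j) * ((Real.pi * M^2)^j / (j.factorial : ℝ))
      ≤ M * 2 * ((Real.pi * M^2)^j / (j.factorial : ℝ)) := mul_le_mul_of_nonneg_right h1 h2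
    _ = 2 * M * (Real.pi * M^2)^j / (j.factorial : ℝ) := by ring

theorem fractional_gronwall (M δ : ℝ) (hM : 0 ≤ M) (hδ : 0 ≤ δ) (f : ℝ → ℝ)
    (hmeas : Measurable f)
    (hnonneg : ∀ s ∈ Icc (0:ℝ) 1, 0 ≤ f s)
    (hbdd : ∃ C : ℝ, ∀ s ∈ Icc (0:ℝ) 1, f s ≤ C)
    (hineq : ∀ s ∈ Icc (0:ℝ) 1,
      f s ≤ δ + M * ∫ u in (0:ℝ)..s, f u / Real.sqrt (s - u)) :
    ∀ s ∈ Icc (0:ℝ) 1,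
      f s ≤ δ * (1 + 2 * M * Real.sqrt s) * Real.exp (Real.pi * M ^ 2 * s) := by
  obtain ⟨C₀, hC₀⟩ := hbdd
  set C := max C₀ 0 with hC
  have hCnn : 0 ≤ C := le_max_right _ _
  have hfC : ∀ s ∈ Icc (0:ℝ) 1, f s ≤ C := fun s hs => (hC₀ s hs).trans (le_max_left _ _)
  -- Main induction: iterating the inequality n times.
  have main : ∀ n : ℕ, ∀ s ∈ Icc (0:ℝ) 1,
      f s ≤ δ * (∑ k ∈ Finset.range n, cseq M k * (Real.sqrt s)^k)
            + C * cseq M n * (Real.sqrt s)^n := by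
    intro n
    induction n with
    | zero =>
      intro s hs
      simpa [cseq] using hfC s hs
    | succ n ih =>
      intro s hs
      rcases eq_or_lt_of_le hs.1 with h0 | hspos
      · -- s = 0
        subst h0
        have h := hineq 0 (by norm_num)
        rw [intervalIntegral.integral_same, mul_zero, add_zero] at h
        rw [Finset.sum_range_succ', Real.sqrt_zero]
        have hz : ∀ k : ℕ, (0:ℝ)^(k+1) = 0 := fun k => zero_pow (Nat.succ_ne_zero k)
        simp only [hz, mul_zero, pow_zero, mul_one, Finset.sum_const_zero, zero_add]
        have : cseq M 0 = 1 := rfl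
        rw [this, mul_one]
        linarith [h]
      · -- 0 < s
        have hsub : Icc (0:ℝ) s ⊆ Icc 0 1 := fun u hu => ⟨hu.1, hu.2.trans hs.2⟩
        set A : ℝ → ℝ := fun u => δ * (∑ k ∈ Finset.range n, cseq M k * (Real.sqrt u)^k)
            + C * cseq M n * (Real.sqrt u)^n with hA
        have hAmeas : Measurable A := by
          apply Measurable.add
          · exact (Finset.measurable_sum _ fun k _ =>
              (sqrt_pow_meas k).const_mul (cseq M k)).const_mul δ
          · exact (sqrt_pow_meas n).const_mul (C * cseq M n)
        have hsqle : ∀ u ∈ Icc (0:ℝ) s, ∀ k : ℕ, (Real.sqrt u)^k ≤ 1 := fun u hu k =>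
          pow_le_one₀ (Real.sqrt_nonneg u) (Real.sqrt_le_one.mpr ((hsub hu).2))
        have hAbd : ∀ u ∈ Icc (0:ℝ) s,
            |A u| ≤ δ * (∑ k ∈ Finset.range n, cseq M k) + C * cseq M n := by
          intro u hu
          have hnn : 0 ≤ A u := by
            refine add_nonneg (mul_nonneg hδ (Finset.sum_nonneg fun k _ =>
              mul_nonneg (cseq_nonneg hM k) (by positivity))) ?_
            exact mul_nonneg (mul_nonneg hCnn (cseq_nonneg hM n)) (by positivity)
          rw [abs_of_nonneg hnn]
          refine add_le_add (mul_le_mul_of_nonneg_left (Finset.sum_le_sum fun k _ => ?_) hδ) ?_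
          · calc cseq M k * (Real.sqrt u)^k ≤ cseq M k * 1 :=
                  mul_le_mul_of_nonneg_left (hsqle u hu k) (cseq_nonneg hM k)
              _ = cseq M k := mul_one _
          · calc C * cseq M n * (Real.sqrt u)^n ≤ C * cseq M n * 1 :=
                  mul_le_mul_of_nonneg_left (hsqle u hu n)
                    (mul_nonneg hCnn (cseq_nonneg hM n))
              _ = C * cseq M n := mul_one _
        have hfint : IntervalIntegrable (fun u => f u / Real.sqrt (s-u)) volume 0 s := by
          refine kernel_integrable hspos hmeas (K := C) fun u hu => ?_
          rw [abs_of_nonneg (hnonneg u (hsub hu))]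
          exact hfC u (hsub hu)
        have hAint : IntervalIntegrable (fun u => A u / Real.sqrt (s-u)) volume 0 s :=
          kernel_integrable hspos hAmeas hAbd
        have hker : ∀ k : ℕ,
            IntervalIntegrable (fun u => (Real.sqrt u)^k / Real.sqrt (s-u)) volume 0 s := by
          intro k
          refine kernel_integrable hspos (sqrt_pow_meas k) (K := 1) fun u hu => ?_
          rw [abs_of_nonneg (by positivity)]
          exact hsqle u hu k
        have hmono : (∫ u in (0:ℝ)..s, f u / Real.sqrt (s-u))
            ≤ ∫ u in (0:ℝ)..s, A u / Real.sqrt (s-u) := by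
          refine intervalIntegral.integral_mono_on hspos.le hfint hAint fun u hu => ?_
          exact div_le_div_nonneg_denom (ih u (hsub hu)) (Real.sqrt_nonneg _)
        have hsplit : (fun u => A u / Real.sqrt (s-u))
            = fun u => (∑ k ∈ Finset.range n,
                (δ * cseq M k) * ((Real.sqrt u)^k / Real.sqrt (s-u)))
              + (C * cseq M n) * ((Real.sqrt u)^n / Real.sqrt (s-u)) := by
          funext u
          rw [hA]
          rw [add_div, Finset.mul_sum, Finset.sum_div]
          congr 1
          · exact Finset.sum_congr rfl fun k _ => by ring
          · ring
        have hval : (∫ u in (0:ℝ)..s, A u / Real.sqrt (s-u))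
            = ∑ k ∈ Finset.range n,
                (δ * cseq M k) * ((Real.sqrt s)^(k+1) * Ifun k)
              + (C * cseq M n) * ((Real.sqrt s)^(n+1) * Ifun n) := by
          have hint1 : IntervalIntegrable (fun u => ∑ k ∈ Finset.range n,
              (δ * cseq M k) * ((Real.sqrt u)^k / Real.sqrt (s-u))) volume 0 s := by
            have heq2 : (fun u => ∑ k ∈ Finset.range n,
                (δ * cseq M k) * ((Real.sqrt u)^k / Real.sqrt (s-u)))
                = ∑ k ∈ Finset.range n, fun u =>
                    (δ * cseq M k) * ((Real.sqrt u)^k / Real.sqrt (s-u)) := by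
              funext u
              simp [Finset.sum_apply]
            have h := IntervalIntegrable.sum (μ := volume) (a := (0:ℝ)) (b := s)
              (Finset.range n)
              (f := fun k => fun u => (δ * cseq M k) * ((Real.sqrt u)^k / Real.sqrt (s-u)))
              (fun k _ => (hker k).const_mul _)
            rw [heq2]
            exact h
          rw [hsplit, intervalIntegral.integral_add hint1 ((hker n).const_mul _),
            intervalIntegral.integral_finset_sum fun k _ => (hker k).const_mul _,
            intervalIntegral.integral_const_mul, J_eq hspos]
          congr 1
          exact Finset.sum_congr rfl fun k _ => by
            rw [intervalIntegral.integral_const_mul, J_eq hspos]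
        have hstep : f s ≤ δ + M * (∑ k ∈ Finset.range n,
              (δ * cseq M k) * ((Real.sqrt s)^(k+1) * Ifun k)
            + (C * cseq M n) * ((Real.sqrt s)^(n+1) * Ifun n)) := by
          refine (hineq s hs).trans ?_
          rw [← hval]
          exact add_le_add_right (mul_le_mul_of_nonneg_left hmono hM) δ
        refine hstep.trans (le_of_eq ?_)
        rw [Finset.sum_range_succ']
        simp only [cseq, pow_zero, mul_one]
        have hsum2 : (∑ k ∈ Finset.range n, M * (δ * cseq M k * ((Real.sqrt s)^(k+1) * Ifun k)))
            = ∑ k ∈ Finset.range n, δ * (M * Ifun k * cseq M k * (Real.sqrt s)^(k+1)) :=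
          Finset.sum_congr rfl fun k _ => by ring
        rw [mul_add, Finset.mul_sum, hsum2, mul_add, Finset.mul_sum]
        ring
  -- Conclusion: take the limit n → ∞ along even indices.
  intro s hs
  set x := Real.pi * M^2 * s with hx
  have hxnn : 0 ≤ x := by
    have hs0 : (0:ℝ) ≤ s := hs.1
    positivity
  have hsq : ∀ n : ℕ, (Real.sqrt s)^(2*n) = s^n := by
    intro n
    rw [pow_mul, Real.sq_sqrt hs.1]
  have hxpow : ∀ n : ℕ, (Real.pi * M^2)^n * s^n = x^n := fun n => (mul_pow _ _ n).symm
  have haux : ∀ n : ℕ, ∑ k ∈ Finset.range (2*n), cseq M k * (Real.sqrt s)^k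
      ≤ (1 + 2*M*Real.sqrt s) * ∑ j ∈ Finset.range n, x^j / (j.factorial : ℝ) := by
    intro n
    induction n with
    | zero => simp
    | succ n ih =>
      rw [show 2*(n+1) = (2*n)+1+1 by ring, Finset.sum_range_succ, Finset.sum_range_succ,
        Finset.sum_range_succ]
      have e1 : cseq M (2*n) * (Real.sqrt s)^(2*n) = x^n / (n.factorial : ℝ) := by
        rw [cseq_even, hsq, div_mul_eq_mul_div, hxpow]
      have e2 : cseq M (2*n+1) * (Real.sqrt s)^(2*n+1)
          ≤ 2*M*Real.sqrt s * (x^n / (n.factorial : ℝ)) := by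
        have h1 : (Real.sqrt s)^(2*n+1) = s^n * Real.sqrt s := by
          rw [pow_succ, hsq]
        rw [h1, ← mul_assoc]
        have h2 := cseq_odd_le hM n
        calc cseq M (2*n+1) * s^n * Real.sqrt s
            ≤ (2 * M * (Real.pi * M^2)^n / (n.factorial : ℝ)) * s^n * Real.sqrt s := by
              have hs0 : (0:ℝ) ≤ s^n * Real.sqrt s :=
                mul_nonneg (pow_nonneg hs.1 n) (Real.sqrt_nonneg s)
              have := mul_le_mul_of_nonneg_right h2 hs0
              calc cseq M (2*n+1) * s^n * Real.sqrt s
                  = cseq M (2*n+1) * (s^n * Real.sqrt s) := by ring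
                _ ≤ (2 * M * (Real.pi * M^2)^n / (n.factorial : ℝ)) * (s^n * Real.sqrt s) := this
                _ = (2 * M * (Real.pi * M^2)^n / (n.factorial : ℝ)) * s^n * Real.sqrt s := by ring
          _ = 2*M*Real.sqrt s * (x^n / (n.factorial : ℝ)) := by
              rw [← hxpow]; ring
      calc ∑ k ∈ Finset.range (2*n), cseq M k * (Real.sqrt s)^k
            + cseq M (2*n) * (Real.sqrt s)^(2*n) + cseq M (2*n+1) * (Real.sqrt s)^(2*n+1)
          ≤ (1 + 2*M*Real.sqrt s) * ∑ j ∈ Finset.range n, x^j / (j.factorial : ℝ)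
            + x^n / (n.factorial : ℝ) + 2*M*Real.sqrt s * (x^n / (n.factorial : ℝ)) := by
            exact add_le_add (add_le_add ih (le_of_eq e1)) e2
        _ = (1 + 2*M*Real.sqrt s) * (∑ j ∈ Finset.range n, x^j / (j.factorial : ℝ)
              + x^n / (n.factorial : ℝ)) := by ring
  have key : ∀ n : ℕ, f s ≤ δ * (1 + 2*M*Real.sqrt s) * Real.exp x
      + C * (x^n / (n.factorial : ℝ)) := by
    intro n
    have h1 := main (2*n) s hs
    have h2 : δ * (∑ k ∈ Finset.range (2*n), cseq M k * (Real.sqrt s)^k)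
        ≤ δ * (1 + 2*M*Real.sqrt s) * Real.exp x := by
      have h3 : (∑ k ∈ Finset.range (2*n), cseq M k * (Real.sqrt s)^k)
          ≤ (1 + 2*M*Real.sqrt s) * Real.exp x := by
        refine (haux n).trans ?_
        refine mul_le_mul_of_nonneg_left ?_ (by positivity)
        exact Real.sum_le_exp_of_nonneg hxnn n
      rw [mul_assoc]
      exact mul_le_mul_of_nonneg_left h3 hδ
    have h4 : C * cseq M (2*n) * (Real.sqrt s)^(2*n) = C * (x^n / (n.factorial : ℝ)) := by
      rw [cseq_even, hsq, mul_assoc, div_mul_eq_mul_div, hxpow]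
    linarith [h1, h2, h4.le, h4.ge]
  have hlim : Filter.Tendsto (fun n : ℕ => δ * (1 + 2*M*Real.sqrt s) * Real.exp x
      + C * (x^n / (n.factorial : ℝ))) Filter.atTop
      (nhds (δ * (1 + 2*M*Real.sqrt s) * Real.exp x + C * 0)) :=
    Filter.Tendsto.add tendsto_const_nhds
      ((FloorSemiring.tendsto_pow_div_factorial_atTop x).const_mul C)
  have := ge_of_tendsto' hlim key
  simpa [hx] using this
end

section
/- Let a > 0, M ≥ 0, and let f : [0,a] → [0,∞) be a bounded measurable function satisfying f(s) ≤ M ∫_0^s f(u)/√(s−u) du for every s ∈ [0,a]. Then f(s) = 0 for every s ∈ [0,a]. -/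
open MeasureTheory Set
open intervalIntegral

lemma rpow_sqrt_eq (x : ℝ) (hx : 0 ≤ x) : x ^ (-(1/2) : ℝ) = 1 / Real.sqrt x := by
  rw [Real.rpow_neg hx, Real.sqrt_eq_rpow, one_div]
  norm_num

lemma ker_int (t s : ℝ) (h : t ≤ s) :
    IntervalIntegrable (fun u => 1 / Real.sqrt (s - u)) volume t s := by
  have h1 : IntervalIntegrable (fun x : ℝ => x ^ (-(1/2) : ℝ)) volume (s - t) (s - s) :=
    intervalIntegral.intervalIntegrable_rpow' (by norm_num)
  have h2 := h1.comp_sub_left s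
  simp only [sub_sub_cancel, sub_self, sub_zero] at h2
  apply h2.mono_fun
  · exact (measurable_const.div (measurable_const.sub measurable_id).sqrt).aestronglyMeasurable
  · filter_upwards [ae_restrict_mem measurableSet_uIoc] with u hu
    rw [uIoc_of_le h] at hu
    rw [rpow_sqrt_eq _ (by linarith [hu.2] : (0:ℝ) ≤ s - u)]

lemma ker_val (t s : ℝ) (h : t ≤ s) :
    (∫ u in t..s, 1 / Real.sqrt (s - u)) = 2 * Real.sqrt (s - t) := by
  have h1 := intervalIntegral.integral_comp_sub_left (a := t) (b := s)
    (fun x : ℝ => 1 / Real.sqrt x) s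
  rw [h1, sub_self]
  have h2 : (∫ x in (0:ℝ)..(s - t), 1 / Real.sqrt x)
      = ∫ x in (0:ℝ)..(s - t), x ^ (-(1/2) : ℝ) := by
    apply intervalIntegral.integral_congr
    intro x hx
    rw [uIcc_of_le (by linarith)] at hx
    exact (rpow_sqrt_eq x hx.1).symm
  rw [h2, integral_rpow (Or.inl (by norm_num))]
  norm_num
  rw [Real.sqrt_eq_rpow]
  ring

lemma frac_div_le (fu B su : ℝ) (hf0 : 0 ≤ fu) (hfB : fu ≤ B) (hsu : 0 ≤ su) :
    fu / Real.sqrt su ≤ B * (1 / Real.sqrt su) := by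
  rw [mul_one_div]
  rcases eq_or_lt_of_le hsu with rfl | hpos
  · simp
  · exact (div_le_div_iff_of_pos_right (Real.sqrt_pos.mpr hpos)).mpr hfB

lemma window (a M : ℝ) (hM : 0 ≤ M) (f : ℝ → ℝ) (hmeas : Measurable f)
    (hnonneg : ∀ s ∈ Icc 0 a, 0 ≤ f s) (C : ℝ) (hC : 0 ≤ C)
    (hCb : ∀ s ∈ Icc 0 a, f s ≤ C)
    (hineq : ∀ s ∈ Icc 0 a, f s ≤ M * ∫ u in (0:ℝ)..s, f u / Real.sqrt (s - u))
    (t d : ℝ) (ht0 : 0 ≤ t) (hta : t ≤ a) (hd : 0 ≤ d)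
    (hzero : ∀ u ∈ Icc 0 t, f u = 0)
    (hcontr : M * (2 * Real.sqrt d) ≤ 1/2) :
    ∀ s ∈ Icc t (min (t + d) a), f s = 0 := by
  have key : ∀ k : ℕ, ∀ s ∈ Icc t (min (t + d) a), f s ≤ (1/2 : ℝ)^k * C := by
    intro k
    induction k with
    | zero =>
      intro s hs
      exact by simpa using hCb s ⟨ht0.trans hs.1, hs.2.trans (min_le_right _ _)⟩
    | succ k ih =>
      intro s hs
      have hts : t ≤ s := hs.1
      have hsa : s ≤ a := hs.2.trans (min_le_right _ _)
      have hstd : s ≤ t + d := hs.2.trans (min_le_left _ _)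
      have hs0a : s ∈ Icc (0:ℝ) a := ⟨ht0.trans hts, hsa⟩
      set B : ℝ := (1/2 : ℝ)^k * C with hB
      have hBnn : 0 ≤ B := by positivity
      have hker := ker_int t s hts
      -- integrability on [0,t]
      have h0t_int : IntervalIntegrable (fun u => f u / Real.sqrt (s - u)) volume 0 t := by
        apply (_root_.intervalIntegrable_const (c := (0:ℝ))).mono_fun
        · exact (hmeas.div (measurable_const.sub measurable_id).sqrt).aestronglyMeasurable
        · filter_upwards [ae_restrict_mem measurableSet_uIoc] with u hu
          rw [uIoc_of_le ht0] at hu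
          rw [hzero u ⟨hu.1.le, hu.2⟩]
          simp
      have h0t_eq : (∫ u in (0:ℝ)..t, f u / Real.sqrt (s - u)) = 0 := by
        have he : (∫ u in (0:ℝ)..t, f u / Real.sqrt (s - u))
            = ∫ _u in (0:ℝ)..t, (0:ℝ) :=
          intervalIntegral.integral_congr (fun u hu => by
            rw [uIcc_of_le ht0] at hu
            simp [hzero u hu])
        simpa using he
      -- integrability on [t,s]
      have hts_int : IntervalIntegrable (fun u => f u / Real.sqrt (s - u)) volume t s := by
        apply (hker.const_mul B).mono_fun
        · exact (hmeas.div (measurable_const.sub measurable_id).sqrt).aestronglyMeasurable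
        · filter_upwards [ae_restrict_mem measurableSet_uIoc] with u hu
          rw [uIoc_of_le hts] at hu
          have hu0a : u ∈ Icc (0:ℝ) a := ⟨ht0.trans hu.1.le, hu.2.trans hsa⟩
          have hfu0 : 0 ≤ f u := hnonneg u hu0a
          have hfuB : f u ≤ B := ih u ⟨hu.1.le, hu.2.trans hs.2⟩
          have hsu : 0 ≤ s - u := by linarith [hu.2]
          have := frac_div_le (f u) B (s - u) hfu0 hfuB hsu
          rw [Real.norm_eq_abs, Real.norm_eq_abs,
            abs_of_nonneg (by positivity), abs_of_nonneg (by positivity)]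
          exact this
      have hmono : (∫ u in t..s, f u / Real.sqrt (s - u))
          ≤ ∫ u in t..s, B * (1 / Real.sqrt (s - u)) := by
        apply intervalIntegral.integral_mono_on hts hts_int (hker.const_mul B)
        intro u hu
        have hu0a : u ∈ Icc (0:ℝ) a := ⟨ht0.trans hu.1, hu.2.trans hsa⟩
        exact frac_div_le (f u) B (s - u) (hnonneg u hu0a)
          (ih u ⟨hu.1, hu.2.trans hs.2⟩) (by linarith [hu.2])
      have hval : (∫ u in t..s, B * (1 / Real.sqrt (s - u))) = B * (2 * Real.sqrt (s - t)) := by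
        rw [intervalIntegral.integral_const_mul, ker_val t s hts]
      have hsplit : (∫ u in (0:ℝ)..s, f u / Real.sqrt (s - u))
          = (∫ u in (0:ℝ)..t, f u / Real.sqrt (s - u))
            + ∫ u in t..s, f u / Real.sqrt (s - u) :=
        (intervalIntegral.integral_add_adjacent_intervals h0t_int hts_int).symm
      have hsq : Real.sqrt (s - t) ≤ Real.sqrt d :=
        Real.sqrt_le_sqrt (by linarith)
      calc f s ≤ M * ∫ u in (0:ℝ)..s, f u / Real.sqrt (s - u) := hineq s hs0a
        _ = M * ∫ u in t..s, f u / Real.sqrt (s - u) := by rw [hsplit, h0t_eq, zero_add]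
        _ ≤ M * (B * (2 * Real.sqrt (s - t))) := by
            apply mul_le_mul_of_nonneg_left _ hM
            rw [← hval]; exact hmono
        _ = (M * (2 * Real.sqrt (s - t))) * B := by ring
        _ ≤ (1/2) * B := by
            apply mul_le_mul_of_nonneg_right _ hBnn
            calc M * (2 * Real.sqrt (s - t)) ≤ M * (2 * Real.sqrt d) := by
                  apply mul_le_mul_of_nonneg_left (by linarith) hM
              _ ≤ 1/2 := hcontr
        _ = (1/2 : ℝ)^(k+1) * C := by rw [hB]; ring
  intro s hs
  have hle : f s ≤ 0 := by
    have hlim : Filter.Tendsto (fun k : ℕ => (1/2 : ℝ)^k * C) Filter.atTop (nhds 0) := by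
      simpa using (tendsto_pow_atTop_nhds_zero_of_lt_one (r := (1/2:ℝ)) (by norm_num) (by norm_num)).mul_const C
    exact ge_of_tendsto hlim (Filter.Eventually.of_forall (fun k => key k s hs))
  have hge : 0 ≤ f s := hnonneg s ⟨ht0.trans hs.1, hs.2.trans (min_le_right _ _)⟩
  linarith

theorem fractional_gronwall_homogeneous (a M : ℝ) (ha : 0 < a) (hM : 0 ≤ M)
    (f : ℝ → ℝ)
    (hmeas : Measurable f)
    (hnonneg : ∀ s ∈ Icc 0 a, 0 ≤ f s)
    (hbdd : ∃ C : ℝ, ∀ s ∈ Icc 0 a, f s ≤ C)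
    (hineq : ∀ s ∈ Icc 0 a,
      f s ≤ M * ∫ u in (0:ℝ)..s, f u / Real.sqrt (s - u)) :
    ∀ s ∈ Icc 0 a, f s = 0 := by
  obtain ⟨C0, hC0⟩ := hbdd
  set C : ℝ := max C0 0 with hCdef
  have hC : 0 ≤ C := le_max_right _ _
  have hCb : ∀ s ∈ Icc 0 a, f s ≤ C := fun s hs => (hC0 s hs).trans (le_max_left _ _)
  set d : ℝ := ((4 * (M + 1))⁻¹) ^ 2 with hddef
  have hMpos : (0:ℝ) < 4 * (M + 1) := by linarith
  have hdpos : 0 < d := by positivity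
  have hsqd : Real.sqrt d = (4 * (M + 1))⁻¹ := by
    rw [hddef, Real.sqrt_sq (by positivity)]
  have hcontr : M * (2 * Real.sqrt d) ≤ 1/2 := by
    rw [hsqd]
    have he : M * (2 * (4 * (M + 1))⁻¹) = M / (2 * (M + 1)) := by
      field_simp
      ring
    rw [he, div_le_div_iff₀ (by linarith) (by norm_num)]
    linarith
  have key : ∀ n : ℕ, ∀ s ∈ Icc 0 (min (n * d) a), f s = 0 := by
    intro n
    induction n with
    | zero =>
      intro s hs
      rw [Nat.cast_zero, zero_mul, min_eq_left ha.le] at hs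
      have hs0 : s = 0 := le_antisymm hs.2 hs.1
      subst hs0
      have h1 := hineq 0 ⟨le_refl _, ha.le⟩
      rw [intervalIntegral.integral_same, mul_zero] at h1
      exact le_antisymm h1 (hnonneg 0 ⟨le_refl _, ha.le⟩)
    | succ n ih =>
      intro s hs
      rcases le_or_gt a (n * d) with hcase | hcase
      · -- window already covers a
        apply ih
        have h2 : min ((((n:ℕ) + 1 : ℕ):ℝ) * d) a = a := by
          apply min_eq_right
          push_cast
          nlinarith [hdpos.le]
        refine ⟨hs.1, ?_⟩
        rw [min_eq_right hcase]
        rw [h2] at hs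
        exact hs.2
      · -- t = n * d < a
        set t : ℝ := (n:ℝ) * d with htdef
        have ht0 : 0 ≤ t := by positivity
        have htmin : min t a = t := min_eq_left hcase.le
        have hzero : ∀ u ∈ Icc 0 t, f u = 0 := by
          intro u hu
          exact ih u (by rw [htmin]; exact hu)
        have hw := window a M hM f hmeas hnonneg C hC hCb hineq t d ht0 hcase.le hdpos.le
          hzero hcontr
        rcases le_or_gt s t with hst | hst
        · exact hzero s ⟨hs.1, hst⟩
        · apply hw s
          constructor
          · exact hst.le
          · have : ((n:ℕ) + 1 : ℝ) * d = t + d := by rw [htdef]; ring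
            calc s ≤ min (((n:ℕ) + 1 : ℝ) * d) a := by
                  have h2 := hs.2
                  push_cast at h2
                  exact h2
              _ = min (t + d) a := by rw [this]
  intro s hs
  obtain ⟨n, hn⟩ := exists_nat_ge (a / d)
  have hna : a ≤ n * d := by
    rw [div_le_iff₀ hdpos] at hn
    linarith
  apply key n
  rw [min_eq_right hna]
  exact hs
end

section
/- Let K > 0, n ≥ 1, θ_1, …, θ_n ≥ 0 and 0 ≤ t_1 < t_2 < ⋯ < t_n ≤ 1. Then there is at most one bounded measurable nonnegative function y : [0,1] → [0,∞) satisfying y(s) = Σ_{k=1}^n θ_k ∫_0^s 1_{[0,t_k]}(1−u)/√(2π(s−u)) du − K ∫_0^s y(u)²/√(2π(s−u)) du for all s ∈ [0,1]. -/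
open MeasureTheory Set

open intervalIntegral Filter


private lemma ker_eq {x : ℝ} (hx : 0 ≤ x) : 1 / Real.sqrt x = x ^ (-(1/2) : ℝ) := by
  rw [Real.sqrt_eq_rpow, one_div, ← Real.rpow_neg hx]

private lemma ker_integral {a s : ℝ} (_h : a ≤ s) :
    ∫ u in a..s, (s - u) ^ (-(1/2) : ℝ) = 2 * Real.sqrt (s - a) := by
  rw [intervalIntegral.integral_comp_sub_left (fun x => x ^ (-(1/2):ℝ)) s, sub_self]
  rw [integral_rpow (Or.inl (by norm_num))]
  rw [Real.sqrt_eq_rpow, Real.zero_rpow (by norm_num)]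
  ring_nf

private lemma ker_integrable {d : ℝ → ℝ} (hd : Measurable d) {D a b s : ℝ}
    (hab : a ≤ b) (hbs : b ≤ s)
    (hbd : ∀ u ∈ Ioc a b, |d u| ≤ D) :
    IntervalIntegrable (fun u => d u * (s - u) ^ (-(1/2) : ℝ)) volume a b := by
  have h0 : IntervalIntegrable (fun x : ℝ => x ^ (-(1/2):ℝ)) volume (s-a) (s-b) :=
    intervalIntegrable_rpow' (by norm_num)
  have h1 := h0.comp_sub_left s
  simp only [sub_sub_cancel] at h1
  have hker := h1.const_mul D
  rw [intervalIntegrable_iff] at hker ⊢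
  apply MeasureTheory.Integrable.mono hker
  · exact (hd.mul (by fun_prop : Measurable fun u : ℝ => (s - u) ^ (-(1/2):ℝ))).aestronglyMeasurable
  · rw [uIoc_of_le hab]
    filter_upwards [ae_restrict_mem measurableSet_Ioc] with u hu
    have h1 : 0 ≤ (s - u) ^ (-(1/2) : ℝ) := Real.rpow_nonneg (by linarith [hu.2]) _
    have h2 : 0 ≤ D := le_trans (abs_nonneg _) (hbd u hu)
    rw [Real.norm_eq_abs, Real.norm_eq_abs, abs_mul, abs_of_nonneg h1,
      abs_of_nonneg (by positivity : (0:ℝ) ≤ D * (s - u) ^ (-(1/2) : ℝ))]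
    exact mul_le_mul_of_nonneg_right (hbd u hu) h1

private lemma gronwall_aux (L D : ℝ) (hL : 0 ≤ L) (hD : 0 ≤ D) (d : ℝ → ℝ) (hd : Measurable d)
    (hdnn : ∀ u ∈ Icc (0:ℝ) 1, 0 ≤ d u) (hdb : ∀ u ∈ Icc (0:ℝ) 1, d u ≤ D)
    (h : ∀ s ∈ Icc (0:ℝ) 1, d s ≤ L * ∫ u in (0:ℝ)..s, d u * (s - u) ^ (-(1/2):ℝ)) :
    ∀ s ∈ Icc (0:ℝ) 1, d s = 0 := by
  set δ : ℝ := (16*L^2+1)⁻¹ with hδdef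
  have hδ : 0 < δ := by positivity
  have hcontr : L * (2 * Real.sqrt δ) ≤ 1/2 := by
    set T : ℝ := Real.sqrt (16*L^2+1) with hT
    have hT2 : T^2 = 16*L^2+1 := Real.sq_sqrt (by positivity)
    have hT0 : 0 < T := Real.sqrt_pos.mpr (by positivity)
    have hTL : 4*L ≤ T := by nlinarith
    have hsd : Real.sqrt δ = T⁻¹ := by
      rw [hδdef, Real.sqrt_inv]
    have h4 : (4*L)*T⁻¹ ≤ 1 := by
      calc (4*L)*T⁻¹ ≤ T*T⁻¹ := mul_le_mul_of_nonneg_right hTL (inv_nonneg.mpr hT0.le)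
        _ = 1 := mul_inv_cancel₀ hT0.ne'
    rw [hsd]
    nlinarith [h4]
  -- key step
  have key : ∀ a : ℝ, 0 ≤ a → (∀ v ∈ Icc (0:ℝ) 1, v ≤ a → d v = 0) →
      ∀ s ∈ Icc (0:ℝ) 1, s ≤ a + δ → d s = 0 := by
    intro a ha hZ s hs hsa
    have hbound : ∀ m : ℕ, ∀ s' ∈ Icc (0:ℝ) 1, s' ≤ a + δ → d s' ≤ D / 2^m := by
      intro m
      induction m with
      | zero => intro s' hs' _; simpa using hdb s' hs'
      | succ m ih =>
        intro s' hs' hs'a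
        rcases le_or_gt s' a with h2 | h2
        · rw [hZ s' hs' h2]; positivity
        · have hk1 : IntervalIntegrable (fun u => d u * (s' - u) ^ (-(1/2):ℝ)) volume 0 a :=
            ker_integrable hd ha h2.le (fun u hu => by
              rw [abs_of_nonneg (hdnn u ⟨hu.1.le, by linarith [hu.2, hs'.2]⟩)]
              exact hdb u ⟨hu.1.le, by linarith [hu.2, hs'.2]⟩)
          have hk2 : IntervalIntegrable (fun u => d u * (s' - u) ^ (-(1/2):ℝ)) volume a s' :=
            ker_integrable hd h2.le le_rfl (fun u hu => by
              rw [abs_of_nonneg (hdnn u ⟨by linarith [hu.1], by linarith [hu.2, hs'.2]⟩)]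
              exact hdb u ⟨by linarith [hu.1], by linarith [hu.2, hs'.2]⟩)
          have hk3 : IntervalIntegrable (fun u => (D/2^m) * (s' - u) ^ (-(1/2):ℝ)) volume a s' :=
            ker_integrable measurable_const h2.le le_rfl (fun u _ => by
              rw [abs_of_nonneg (by positivity : (0:ℝ) ≤ D/2^m)])
          have hsplit : (∫ u in (0:ℝ)..s', d u * (s' - u) ^ (-(1/2):ℝ)) =
              (∫ u in (0:ℝ)..a, d u * (s' - u) ^ (-(1/2):ℝ)) +
              ∫ u in a..s', d u * (s' - u) ^ (-(1/2):ℝ) :=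
            (integral_add_adjacent_intervals hk1 hk2).symm
          have hz1 : (∫ u in (0:ℝ)..a, d u * (s' - u) ^ (-(1/2):ℝ)) = 0 := by
            have hc : (∫ u in (0:ℝ)..a, d u * (s' - u) ^ (-(1/2):ℝ)) =
                ∫ u in (0:ℝ)..a, (0:ℝ) := by
              apply intervalIntegral.integral_congr
              intro u hu
              rw [uIcc_of_le ha] at hu
              show d u * (s' - u) ^ (-(1/2):ℝ) = 0
              rw [hZ u ⟨hu.1, by linarith [hu.2, hs'.2]⟩ hu.2, zero_mul]
            simpa using hc
          have hmono : (∫ u in a..s', d u * (s' - u) ^ (-(1/2):ℝ)) ≤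
              ∫ u in a..s', (D/2^m) * (s' - u) ^ (-(1/2):ℝ) := by
            apply integral_mono_on h2.le hk2 hk3
            intro u hu
            have hk0 : 0 ≤ (s' - u) ^ (-(1/2):ℝ) := Real.rpow_nonneg (by linarith [hu.2]) _
            exact mul_le_mul_of_nonneg_right
              (ih u ⟨by linarith [hu.1], by linarith [hu.2, hs'.2]⟩ (by linarith [hu.2])) hk0
          have hval : (∫ u in a..s', (D/2^m) * (s' - u) ^ (-(1/2):ℝ)) =
              (D/2^m) * (2 * Real.sqrt (s' - a)) := by
            rw [intervalIntegral.integral_const_mul, ker_integral h2.le]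
          have hsq : Real.sqrt (s' - a) ≤ Real.sqrt δ :=
            Real.sqrt_le_sqrt (by linarith)
          calc d s' ≤ L * ∫ u in (0:ℝ)..s', d u * (s' - u) ^ (-(1/2):ℝ) := h s' hs'
            _ = L * ((∫ u in (0:ℝ)..a, d u * (s' - u) ^ (-(1/2):ℝ)) +
                ∫ u in a..s', d u * (s' - u) ^ (-(1/2):ℝ)) := by rw [hsplit]
            _ = L * ∫ u in a..s', d u * (s' - u) ^ (-(1/2):ℝ) := by rw [hz1, zero_add]
            _ ≤ L * ((D/2^m) * (2 * Real.sqrt (s' - a))) := by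
                apply mul_le_mul_of_nonneg_left _ hL
                rw [← hval]; exact hmono
            _ ≤ L * ((D/2^m) * (2 * Real.sqrt δ)) := by
                apply mul_le_mul_of_nonneg_left _ hL
                apply mul_le_mul_of_nonneg_left _ (by positivity)
                linarith
            _ = (L * (2 * Real.sqrt δ)) * (D/2^m) := by ring
            _ ≤ (1/2) * (D/2^m) := mul_le_mul_of_nonneg_right hcontr (by positivity)
            _ = D / 2^(m+1) := by ring
    have ht : Tendsto (fun m : ℕ => D / 2^m) atTop (nhds 0) := by
      have := (tendsto_pow_atTop_nhds_zero_of_lt_one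
        (by norm_num : (0:ℝ) ≤ 1/2) (by norm_num : (1/2:ℝ) < 1)).const_mul D
      simpa [div_eq_mul_inv, ← inv_pow, one_div] using this
    have hle : d s ≤ 0 := ge_of_tendsto' ht (fun m => hbound m s hs hsa)
    linarith [hdnn s hs]
  -- iterate
  have main : ∀ m : ℕ, ∀ s ∈ Icc (0:ℝ) 1, s ≤ m * δ → d s = 0 := by
    intro m
    induction m with
    | zero =>
      intro s hs hsm
      have hs0 : s = 0 := le_antisymm (by simpa using hsm) hs.1
      subst hs0
      have := h 0 ⟨le_refl 0, zero_le_one⟩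
      simp only [intervalIntegral.integral_same, mul_zero] at this
      linarith [hdnn 0 ⟨le_refl 0, zero_le_one⟩]
    | succ m ih =>
      intro s hs hsm
      apply key (m * δ) (by positivity) (fun v hv hva => ih v hv hva) s hs
      push_cast at hsm
      linarith
  intro s hs
  apply main ⌈1/δ⌉₊ s hs
  have h1 : (1:ℝ)/δ ≤ ⌈1/δ⌉₊ := Nat.le_ceil _
  have h2 : (1:ℝ) ≤ ⌈1/δ⌉₊ * δ := (div_le_iff₀ hδ).mp h1
  linarith [hs.2]

theorem uniqueness_fractional_integral_equation
    (K : ℝ) (hK : 0 < K) (n : ℕ) (hn : 1 ≤ n)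
    (θ t : Fin n → ℝ) (hθ : ∀ k, 0 ≤ θ k)
    (ht0 : ∀ k, 0 ≤ t k) (ht1 : ∀ k, t k ≤ 1) (htmono : StrictMono t)
    (y₁ y₂ : ℝ → ℝ)
    (hmeas₁ : Measurable y₁) (hmeas₂ : Measurable y₂)
    (hnn₁ : ∀ s ∈ Icc (0:ℝ) 1, 0 ≤ y₁ s) (hnn₂ : ∀ s ∈ Icc (0:ℝ) 1, 0 ≤ y₂ s)
    (hbdd₁ : ∃ C : ℝ, ∀ s ∈ Icc (0:ℝ) 1, y₁ s ≤ C)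
    (hbdd₂ : ∃ C : ℝ, ∀ s ∈ Icc (0:ℝ) 1, y₂ s ≤ C)
    (heq₁ : ∀ s ∈ Icc (0:ℝ) 1,
      y₁ s = (∑ k, θ k * ∫ u in (0:ℝ)..s,
          Set.indicator (Set.Icc (0:ℝ) (t k)) (fun _ => (1:ℝ)) (1 - u)
            / Real.sqrt (2 * Real.pi * (s - u)))
        - K * ∫ u in (0:ℝ)..s, (y₁ u) ^ 2 / Real.sqrt (2 * Real.pi * (s - u)))
    (heq₂ : ∀ s ∈ Icc (0:ℝ) 1,
      y₂ s = (∑ k, θ k * ∫ u in (0:ℝ)..s,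
          Set.indicator (Set.Icc (0:ℝ) (t k)) (fun _ => (1:ℝ)) (1 - u)
            / Real.sqrt (2 * Real.pi * (s - u)))
        - K * ∫ u in (0:ℝ)..s, (y₂ u) ^ 2 / Real.sqrt (2 * Real.pi * (s - u))) :
    ∀ s ∈ Icc (0:ℝ) 1, y₁ s = y₂ s := by
  obtain ⟨C₁, hC₁⟩ := hbdd₁
  obtain ⟨C₂, hC₂⟩ := hbdd₂
  have h01 : (0:ℝ) ∈ Icc (0:ℝ) 1 := ⟨le_refl 0, zero_le_one⟩
  have hC₁0 : 0 ≤ C₁ := le_trans (hnn₁ 0 h01) (hC₁ 0 h01)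
  have hC₂0 : 0 ≤ C₂ := le_trans (hnn₂ 0 h01) (hC₂ 0 h01)
  have hc0 : 0 < Real.sqrt (2*Real.pi) := Real.sqrt_pos.mpr (by positivity)
  set c : ℝ := (Real.sqrt (2*Real.pi))⁻¹ with hcdef
  have hcpos : 0 < c := inv_pos.mpr hc0
  set L : ℝ := K * (C₁+C₂) * c with hLdef
  have hL0 : 0 ≤ L := by positivity
  have habs : ∀ u ∈ Icc (0:ℝ) 1, |y₁ u - y₂ u| ≤ C₁ + C₂ := fun u hu =>
    abs_le.mpr ⟨by linarith [hnn₁ u hu, hC₂ u hu], by linarith [hnn₂ u hu, hC₁ u hu]⟩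
  have key : ∀ s ∈ Icc (0:ℝ) 1,
      |y₁ s - y₂ s| ≤ L * ∫ u in (0:ℝ)..s, |y₁ u - y₂ u| * (s - u) ^ (-(1/2):ℝ) := by
    intro s hs
    have hsub : ∀ u ∈ Ioc (0:ℝ) s, u ∈ Icc (0:ℝ) 1 := fun u hu =>
      ⟨hu.1.le, le_trans hu.2 hs.2⟩
    -- rewrite the 2π kernel
    have hrw : ∀ y : ℝ → ℝ, (∫ u in (0:ℝ)..s, y u ^ 2 / Real.sqrt (2*Real.pi*(s-u)))
        = c * ∫ u in (0:ℝ)..s, y u ^ 2 * (s-u) ^ (-(1/2):ℝ) := by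
      intro y
      rw [← intervalIntegral.integral_const_mul]
      apply intervalIntegral.integral_congr
      intro u hu
      rw [uIcc_of_le hs.1] at hu
      have hsu : 0 ≤ s - u := by linarith [hu.2]
      show y u ^ 2 / Real.sqrt (2*Real.pi*(s-u)) = c * (y u ^ 2 * (s-u) ^ (-(1/2):ℝ))
      rw [← ker_eq hsu, Real.sqrt_mul (by positivity : (0:ℝ) ≤ 2*Real.pi)]
      rw [hcdef]
      field_simp
    -- integrability of squares
    have hi1 : IntervalIntegrable (fun u => y₁ u ^ 2 * (s-u) ^ (-(1/2):ℝ)) volume 0 s :=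
      ker_integrable (hmeas₁.pow_const 2) hs.1 le_rfl (fun u hu => by
        rw [abs_of_nonneg (sq_nonneg _)]
        exact pow_le_pow_left₀ (hnn₁ u (hsub u hu)) (hC₁ u (hsub u hu)) 2)
    have hi2 : IntervalIntegrable (fun u => y₂ u ^ 2 * (s-u) ^ (-(1/2):ℝ)) volume 0 s :=
      ker_integrable (hmeas₂.pow_const 2) hs.1 le_rfl (fun u hu => by
        rw [abs_of_nonneg (sq_nonneg _)]
        exact pow_le_pow_left₀ (hnn₂ u (hsub u hu)) (hC₂ u (hsub u hu)) 2)
    have hiabs : IntervalIntegrable (fun u => |y₁ u - y₂ u| * (s-u) ^ (-(1/2):ℝ)) volume 0 s :=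
      ker_integrable (hmeas₁.sub hmeas₂).abs hs.1 le_rfl (fun u hu => by
        rw [abs_abs]; exact habs u (hsub u hu))
    -- the difference identity
    have hdiff : y₁ s - y₂ s = (K*c) *
        ∫ u in (0:ℝ)..s, (y₂ u ^ 2 * (s-u) ^ (-(1/2):ℝ) - y₁ u ^ 2 * (s-u) ^ (-(1/2):ℝ)) := by
      rw [intervalIntegral.integral_sub hi2 hi1, heq₁ s hs, heq₂ s hs, hrw y₁, hrw y₂]
      ring
    have hnorm : |∫ u in (0:ℝ)..s, (y₂ u ^ 2 * (s-u) ^ (-(1/2):ℝ) - y₁ u ^ 2 * (s-u) ^ (-(1/2):ℝ))|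
        ≤ ∫ u in (0:ℝ)..s, (C₁+C₂) * (|y₁ u - y₂ u| * (s-u) ^ (-(1/2):ℝ)) := by
      apply le_trans (intervalIntegral.abs_integral_le_integral_abs hs.1)
      apply intervalIntegral.integral_mono_on hs.1 (hi2.sub hi1).abs (hiabs.const_mul _)
      intro u hu
      have hsu : 0 ≤ s - u := by linarith [hu.2]
      have hk0 : 0 ≤ (s-u) ^ (-(1/2):ℝ) := Real.rpow_nonneg hsu _
      have hfac : y₂ u ^ 2 * (s-u) ^ (-(1/2):ℝ) - y₁ u ^ 2 * (s-u) ^ (-(1/2):ℝ)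
          = (y₂ u ^ 2 - y₁ u ^ 2) * (s-u) ^ (-(1/2):ℝ) := by ring
      rw [hfac, abs_mul, abs_of_nonneg hk0, ← mul_assoc]
      apply mul_le_mul_of_nonneg_right _ hk0
      have hu1 : u ∈ Icc (0:ℝ) 1 := ⟨hu.1, le_trans hu.2 hs.2⟩
      have hfac2 : y₂ u ^ 2 - y₁ u ^ 2 = (y₂ u - y₁ u) * (y₂ u + y₁ u) := by ring
      rw [hfac2, abs_mul, abs_sub_comm, mul_comm ((C₁+C₂):ℝ)]
      apply mul_le_mul_of_nonneg_left _ (abs_nonneg _)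
      rw [abs_of_nonneg (by linarith [hnn₁ u hu1, hnn₂ u hu1])]
      linarith [hC₁ u hu1, hC₂ u hu1]
    calc |y₁ s - y₂ s| = (K*c) * |∫ u in (0:ℝ)..s,
          (y₂ u ^ 2 * (s-u) ^ (-(1/2):ℝ) - y₁ u ^ 2 * (s-u) ^ (-(1/2):ℝ))| := by
          rw [hdiff, abs_mul, abs_of_nonneg (by positivity : (0:ℝ) ≤ K*c)]
      _ ≤ (K*c) * ∫ u in (0:ℝ)..s, (C₁+C₂) * (|y₁ u - y₂ u| * (s-u) ^ (-(1/2):ℝ)) :=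
          mul_le_mul_of_nonneg_left hnorm (by positivity)
      _ = L * ∫ u in (0:ℝ)..s, |y₁ u - y₂ u| * (s-u) ^ (-(1/2):ℝ) := by
          rw [intervalIntegral.integral_const_mul, hLdef]; ring
  have hzero := gronwall_aux L (C₁+C₂) hL0 (by positivity)
    (fun u => |y₁ u - y₂ u|) (hmeas₁.sub hmeas₂).abs
    (fun u _ => abs_nonneg _) habs key
  intro s hs
  exact sub_eq_zero.mp (abs_eq_zero.mp (hzero s hs))
end

section
/- Let K > 0 and θ > 0. Let Λ : [0,1] → [0,∞) be continuous on [0,1], continuously differentiable on (0,1), nonnegative and nondecreasing, and satisfy Λ(s) = θ√(2s/π) − K ∫_0^s Λ(u)²/√(2π(s−u)) du for all s ∈ [0,1]. Then Λ(s) ≤ √(θ/K) for all s ∈ [0,1]. -/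
open MeasureTheory Set

/-- For `u ≤ t`, the kernel `1/√(2π(t-u))` equals a constant times `(t-u)^(-1/2)`. -/
lemma lambda_bound_ker_eq {t u : ℝ} (hu : u ≤ t) :
    (Real.sqrt (2 * Real.pi * (t - u)))⁻¹
      = (Real.sqrt (2 * Real.pi))⁻¹ * (t - u) ^ (-(1/2) : ℝ) := by
  have h0 : (0:ℝ) ≤ t - u := sub_nonneg.2 hu
  rw [Real.sqrt_mul (by positivity) (t - u), mul_inv, Real.rpow_neg h0,
    ← Real.sqrt_eq_rpow]

/-- The kernel is interval integrable on any `[a,b]` with `a, b ≤ t`. -/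
lemma lambda_bound_ker_integrable (t a b : ℝ) (ha : a ≤ t) (hb : b ≤ t) :
    IntervalIntegrable (fun u => (Real.sqrt (2 * Real.pi * (t - u)))⁻¹) volume a b := by
  have h1 : IntervalIntegrable (fun x : ℝ => x ^ (-(1/2) : ℝ)) volume (t - a) (t - b) :=
    intervalIntegral.intervalIntegrable_rpow' (by norm_num)
  have h2 := (h1.comp_sub_left t).const_mul ((Real.sqrt (2 * Real.pi))⁻¹)
  simp only [sub_sub_cancel] at h2
  rw [intervalIntegrable_iff] at h2 ⊢
  refine h2.congr_fun ?_ measurableSet_uIoc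
  intro u hu
  have hu' : u ≤ t := by
    rcases Set.mem_uIoc.1 hu with h | h
    · exact h.2.trans hb
    · exact h.2.trans ha
  exact (lambda_bound_ker_eq hu').symm

/-- Explicit value of the kernel integral. -/
lemma lambda_bound_ker_integral (t : ℝ) (ht : 0 ≤ t) :
    (∫ u in (0:ℝ)..t, (Real.sqrt (2 * Real.pi * (t - u)))⁻¹)
      = Real.sqrt (2 * t / Real.pi) := by
  have hπ : (0:ℝ) < Real.pi := Real.pi_pos
  have h1 : ∀ u ∈ uIcc (0:ℝ) t,
      (Real.sqrt (2 * Real.pi * (t - u)))⁻¹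
        = (Real.sqrt (2 * Real.pi))⁻¹ * (t - u) ^ (-(1/2) : ℝ) := by
    intro u hu
    rw [uIcc_of_le ht] at hu
    exact lambda_bound_ker_eq hu.2
  rw [intervalIntegral.integral_congr h1, intervalIntegral.integral_const_mul,
    intervalIntegral.integral_comp_sub_left (fun x : ℝ => x ^ (-(1/2) : ℝ)) t]
  simp only [sub_zero, sub_self]
  rw [integral_rpow (Or.inl (by norm_num))]
  have h2 : (-(1/2) : ℝ) + 1 = 1/2 := by norm_num
  rw [h2, Real.zero_rpow (by norm_num), ← Real.sqrt_eq_rpow]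
  have h3 : Real.sqrt (2 * t / Real.pi) = Real.sqrt 2 * Real.sqrt t / Real.sqrt Real.pi := by
    rw [Real.sqrt_div (by positivity), Real.sqrt_mul (by norm_num)]
  have h4 : Real.sqrt (2 * Real.pi) = Real.sqrt 2 * Real.sqrt Real.pi :=
    Real.sqrt_mul (by norm_num) _
  have h5 : (0:ℝ) < Real.sqrt 2 := Real.sqrt_pos.2 (by norm_num)
  have h6 : (0:ℝ) < Real.sqrt Real.pi := Real.sqrt_pos.2 hπ
  have h7 : Real.sqrt 2 * Real.sqrt 2 = 2 := Real.mul_self_sqrt (by norm_num)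
  rw [h3, h4]
  field_simp
  linear_combination (-(Real.sqrt t)) * h7

theorem lambda_bound (K θ : ℝ) (hK : 0 < K) (hθ : 0 < θ) (Λ Λ' : ℝ → ℝ)
    (hcont : ContinuousOn Λ (Icc 0 1))
    (hderiv : ∀ s ∈ Ioo (0:ℝ) 1, HasDerivAt Λ (Λ' s) s)
    (hderivcont : ContinuousOn Λ' (Ioo 0 1))
    (hnn : ∀ s ∈ Icc (0:ℝ) 1, 0 ≤ Λ s)
    (hmono : MonotoneOn Λ (Icc 0 1))
    (heq : ∀ s ∈ Icc (0:ℝ) 1,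
      Λ s = θ * Real.sqrt (2 * s / Real.pi)
        - K * ∫ u in (0:ℝ)..s, (Λ u) ^ 2 / Real.sqrt (2 * Real.pi * (s - u))) :
    ∀ s ∈ Icc (0:ℝ) 1, Λ s ≤ Real.sqrt (θ / K) := by
  have hπ : (0:ℝ) < Real.pi := Real.pi_pos
  set c := Real.sqrt (θ / K) with hc
  have hc0 : 0 < c := Real.sqrt_pos.2 (div_pos hθ hK)
  have hcsq : c ^ 2 = θ / K := Real.sq_sqrt (div_pos hθ hK).le
  have hKc : K * c ^ 2 = θ := by rw [hcsq]; field_simp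
  -- bound of Λ on [0,1]
  obtain ⟨M, hM⟩ := (isCompact_Icc : IsCompact (Icc (0:ℝ) 1)).exists_bound_of_continuousOn hcont
  -- integrability of Λ² times the kernel
  have hΛk_int : ∀ t a b : ℝ, 0 ≤ a → a ≤ b → b ≤ t → t ≤ 1 →
      IntervalIntegrable (fun u => Λ u ^ 2 * (Real.sqrt (2 * Real.pi * (t - u)))⁻¹)
        volume a b := by
    intro t a b ha hab hbt ht1
    rw [intervalIntegrable_iff_integrableOn_Ioc_of_le hab]
    have hker := (intervalIntegrable_iff_integrableOn_Ioc_of_le hab).1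
      (lambda_bound_ker_integrable t a b (hab.trans hbt) hbt)
    have hsub : Ioc a b ⊆ Icc (0:ℝ) 1 := fun x hx =>
      ⟨ha.trans hx.1.le, hx.2.trans (hbt.trans ht1)⟩
    have hmeas : AEStronglyMeasurable (fun u => Λ u ^ 2) (volume.restrict (Ioc a b)) :=
      (((hcont.mono hsub).pow 2)).aestronglyMeasurable measurableSet_Ioc
    refine Integrable.bdd_mul (c := M ^ 2) hker hmeas ?_
    filter_upwards [ae_restrict_mem measurableSet_Ioc] with x hx
    have hMx := hM x (hsub hx)
    have : ‖Λ x ^ 2‖ = ‖Λ x‖ ^ 2 := by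
      rw [Real.norm_eq_abs, Real.norm_eq_abs, ← abs_pow]
    rw [this]
    exact pow_le_pow_left₀ (norm_nonneg _) hMx 2
  -- the combined integrand
  set G : ℝ → ℝ → ℝ := fun t u =>
    θ * (Real.sqrt (2 * Real.pi * (t - u)))⁻¹
      - K * (Λ u ^ 2 * (Real.sqrt (2 * Real.pi * (t - u)))⁻¹) with hG
  have hG_int : ∀ t a b : ℝ, 0 ≤ a → a ≤ b → b ≤ t → t ≤ 1 →
      IntervalIntegrable (G t) volume a b := fun t a b ha hab hbt ht1 =>
    ((lambda_bound_ker_integrable t a b (hab.trans hbt) hbt).const_mul θ).sub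
      ((hΛk_int t a b ha hab hbt ht1).const_mul K)
  -- the key reformulation of the integral equation
  have key : ∀ t : ℝ, 0 ≤ t → t ≤ 1 → Λ t = ∫ u in (0:ℝ)..t, G t u := by
    intro t ht0 ht1
    have h1 := heq t ⟨ht0, ht1⟩
    have h2 : (∫ u in (0:ℝ)..t, Λ u ^ 2 / Real.sqrt (2 * Real.pi * (t - u)))
        = ∫ u in (0:ℝ)..t, Λ u ^ 2 * (Real.sqrt (2 * Real.pi * (t - u)))⁻¹ := by
      simp only [div_eq_mul_inv]
    have h3 : θ * Real.sqrt (2 * t / Real.pi)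
        = ∫ u in (0:ℝ)..t, θ * (Real.sqrt (2 * Real.pi * (t - u)))⁻¹ := by
      rw [intervalIntegral.integral_const_mul, lambda_bound_ker_integral t ht0]
    rw [h1, h2, h3, ← intervalIntegral.integral_const_mul K,
      ← intervalIntegral.integral_sub
        ((lambda_bound_ker_integrable t 0 t ht0 le_rfl).const_mul θ)
        ((hΛk_int t 0 t le_rfl ht0 le_rfl ht1).const_mul K)]
  -- main argument
  intro s hs
  rcases le_or_gt (Λ s) c with hle | hlt
  · exact hle
  exfalso
  set A := Icc (0:ℝ) s ∩ Λ ⁻¹' (Iic c) with hA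
  have hA_closed : IsClosed A :=
    (hcont.mono (Icc_subset_Icc_right hs.2)).preimage_isClosed_of_isClosed
      isClosed_Icc isClosed_Iic
  have hΛ0 : Λ 0 = 0 := by
    have := heq 0 ⟨le_rfl, zero_le_one⟩
    simpa using this
  have h0A : 0 ∈ A := ⟨⟨le_rfl, hs.1⟩, by simp [hΛ0, hc0.le]⟩
  have hbdd : BddAbove A := ⟨s, fun x hx => hx.1.2⟩
  set t₁ := sSup A with ht₁
  have ht₁A : t₁ ∈ A := hA_closed.csSup_mem ⟨0, h0A⟩ hbdd
  have ht₁0 : 0 ≤ t₁ := ht₁A.1.1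
  have ht₁s : t₁ ≤ s := ht₁A.1.2
  have ht₁c : Λ t₁ ≤ c := ht₁A.2
  have ht₁lt : t₁ < s := lt_of_le_of_ne ht₁s (fun hEq => absurd (hEq ▸ ht₁c) (not_le.2 hlt))
  have hgt : ∀ u, t₁ < u → u ≤ s → c < Λ u := by
    intro u hu1 hu2
    by_contra hle2
    push_neg at hle2
    exact absurd (le_csSup hbdd ⟨⟨ht₁0.trans hu1.le, hu2⟩, hle2⟩) (not_le.2 hu1)
  have hΛle : ∀ u ∈ Icc (0:ℝ) t₁, Λ u ≤ c := fun u hu =>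
    (hmono ⟨hu.1, hu.2.trans (ht₁s.trans hs.2)⟩ ⟨ht₁0, ht₁s.trans hs.2⟩ hu.2).trans ht₁c
  have hne : ∀ᵐ u : ℝ ∂(volume : Measure ℝ), u ≠ t₁ := by
    rw [ae_iff]
    simp only [not_not]
    have : {u : ℝ | u = t₁} = {t₁} := by ext; simp
    rw [this]
    exact measure_singleton t₁
  -- split the integral
  have hG_left : IntervalIntegrable (G s) volume 0 t₁ :=
    hG_int s 0 t₁ le_rfl ht₁0 ht₁s hs.2
  have hG_right : IntervalIntegrable (G s) volume t₁ s :=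
    hG_int s t₁ s ht₁0 ht₁s le_rfl hs.2
  have hG_t₁ : IntervalIntegrable (G t₁) volume 0 t₁ :=
    hG_int t₁ 0 t₁ le_rfl ht₁0 le_rfl (ht₁s.trans hs.2)
  have hsplit : Λ s = (∫ u in (0:ℝ)..t₁, G s u) + ∫ u in t₁..s, G s u := by
    rw [key s hs.1 hs.2, intervalIntegral.integral_add_adjacent_intervals hG_left hG_right]
  -- second piece is nonpositive
  have hI2 : (∫ u in t₁..s, G s u) ≤ 0 := by
    have h0 : (∫ u in t₁..s, (0:ℝ)) = 0 := by simp
    rw [← h0]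
    refine intervalIntegral.integral_mono_ae_restrict ht₁lt.le hG_right
      intervalIntegrable_const ?_
    filter_upwards [ae_restrict_mem measurableSet_Icc, ae_restrict_of_ae hne] with u hu hune
    have hu1 : t₁ < u := lt_of_le_of_ne hu.1 (Ne.symm hune)
    have hcu : c < Λ u := hgt u hu1 hu.2
    have hΛsq : c ^ 2 ≤ Λ u ^ 2 := pow_le_pow_left₀ hc0.le hcu.le 2
    have hθle : θ ≤ K * Λ u ^ 2 := by
      calc θ = K * c ^ 2 := hKc.symm
      _ ≤ K * Λ u ^ 2 := by nlinarith
    have hk : (0:ℝ) ≤ (Real.sqrt (2 * Real.pi * (s - u)))⁻¹ :=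
      inv_nonneg.2 (Real.sqrt_nonneg _)
    have := mul_nonneg (sub_nonneg.2 hθle) hk
    simp only [hG, Pi.zero_apply]
    nlinarith
  -- first piece is at most Λ t₁
  have hI1 : (∫ u in (0:ℝ)..t₁, G s u) ≤ ∫ u in (0:ℝ)..t₁, G t₁ u := by
    refine intervalIntegral.integral_mono_ae_restrict ht₁0 hG_left hG_t₁ ?_
    filter_upwards [ae_restrict_mem measurableSet_Icc, ae_restrict_of_ae hne] with u hu hune
    have hu1 : u < t₁ := lt_of_le_of_ne hu.2 hune
    have hΛuc : Λ u ≤ c := hΛle u hu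
    have hΛu0 : 0 ≤ Λ u := hnn u ⟨hu.1, hu.2.trans (ht₁s.trans hs.2)⟩
    have hΛsq : Λ u ^ 2 ≤ c ^ 2 := pow_le_pow_left₀ hΛu0 hΛuc 2
    have hfnn : 0 ≤ θ - K * Λ u ^ 2 := by nlinarith
    have hk1pos : (0:ℝ) < Real.sqrt (2 * Real.pi * (t₁ - u)) :=
      Real.sqrt_pos.2 (by nlinarith)
    have hkle : Real.sqrt (2 * Real.pi * (t₁ - u)) ≤ Real.sqrt (2 * Real.pi * (s - u)) :=
      Real.sqrt_le_sqrt (by nlinarith)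
    have hinv : (Real.sqrt (2 * Real.pi * (s - u)))⁻¹
        ≤ (Real.sqrt (2 * Real.pi * (t₁ - u)))⁻¹ :=
      inv_anti₀ hk1pos hkle
    have h5 := mul_le_mul_of_nonneg_left hinv hfnn
    simp only [hG]
    nlinarith
  have hΛt₁ : (∫ u in (0:ℝ)..t₁, G t₁ u) = Λ t₁ := (key t₁ ht₁0 (ht₁s.trans hs.2)).symm
  have : Λ s ≤ c := by
    rw [hsplit]
    calc (∫ u in (0:ℝ)..t₁, G s u) + ∫ u in t₁..s, G s u
        ≤ (∫ u in (0:ℝ)..t₁, G t₁ u) + 0 := add_le_add hI1 hI2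
      _ = Λ t₁ := by rw [hΛt₁, add_zero]
      _ ≤ c := ht₁c
  exact absurd this (not_le.2 hlt)
end

section
/- Let K > 0 and let h : [0,∞) → [0,∞) be nonnegative, nondecreasing, satisfy h(s) = √(2s/π) − K ∫_0^s h(u)²/√(2π(s−u)) du for all s ≥ 0, and suppose h(s) → l as s → ∞. Then K l² ≥ 1. -/
open MeasureTheory Set Filter

lemma rpow_eq_sqrt_inv (s : ℝ) (hs : 0 ≤ s) :
    EqOn (fun x : ℝ => x ^ (-(1/2):ℝ)) (fun x => (Real.sqrt x)⁻¹) (uIcc 0 s) := by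
  intro x hx
  rw [uIcc_of_le hs] at hx
  simp only
  rw [Real.rpow_neg hx.1, ← Real.sqrt_eq_rpow]

lemma sqrt_inv_intInt (s : ℝ) (hs : 0 ≤ s) :
    IntervalIntegrable (fun u => (Real.sqrt (s - u))⁻¹) volume 0 s := by
  have h1 : IntervalIntegrable (fun x : ℝ => (Real.sqrt x)⁻¹) volume 0 s := by
    have h0 : IntervalIntegrable (fun x : ℝ => x ^ (-(1/2) : ℝ)) volume 0 s :=
      intervalIntegral.intervalIntegrable_rpow' (by norm_num)
    refine h0.congr ?_
    intro x hx
    exact rpow_eq_sqrt_inv s hs (uIoc_subset_uIcc hx)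
  have h2 := h1.comp_sub_left s
  simp only [sub_zero, sub_self] at h2
  exact h2.symm

lemma sqrt_inv_int (s : ℝ) (hs : 0 ≤ s) :
    ∫ u in (0:ℝ)..s, (Real.sqrt (s - u))⁻¹ = 2 * Real.sqrt s := by
  have h0 := intervalIntegral.integral_comp_sub_left (a := 0) (b := s)
    (fun x => (Real.sqrt x)⁻¹) s
  simp only [sub_zero, sub_self] at h0
  have h1 : (∫ u in (0:ℝ)..s, (Real.sqrt u)⁻¹) = ∫ u in (0:ℝ)..s, u ^ (-(1/2):ℝ) :=
    intervalIntegral.integral_congr (rpow_eq_sqrt_inv s hs).symm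
  rw [show (∫ u in (0:ℝ)..s, (Real.sqrt (s-u))⁻¹)
      = ∫ u in (0:ℝ)..s, (fun x => (Real.sqrt x)⁻¹) (s-u) from rfl,
    h0, h1, integral_rpow (Or.inl (by norm_num))]
  rw [Real.sqrt_eq_rpow]
  norm_num
  ring

theorem limit_lower_bound (K : ℝ) (hK : 0 < K) (h : ℝ → ℝ) (l : ℝ)
    (hnn : ∀ s : ℝ, 0 ≤ s → 0 ≤ h s)
    (hmono : MonotoneOn h (Ici 0))
    (heq : ∀ s : ℝ, 0 ≤ s →
      h s = Real.sqrt (2 * s / Real.pi)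
        - K * ∫ u in (0:ℝ)..s, (h u) ^ 2 / Real.sqrt (2 * Real.pi * (s - u)))
    (hlim : Tendsto h atTop (nhds l)) :
    1 ≤ K * l ^ 2 := by
  have hle : ∀ u : ℝ, 0 ≤ u → h u ≤ l := by
    intro u hu
    refine ge_of_tendsto hlim ?_
    filter_upwards [eventually_ge_atTop u, eventually_ge_atTop (0:ℝ)] with s hsu hs0
    exact hmono hu hs0 hsu
  have hl0 : 0 ≤ l := le_trans (hnn 0 le_rfl) (hle 0 le_rfl)
  have hπ : (0:ℝ) < Real.pi := Real.pi_pos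
  -- key inequality
  have key : ∀ s : ℝ, 0 ≤ s → Real.sqrt (2 * s / Real.pi) * (1 - K * l ^ 2) ≤ l := by
    intro s hs
    -- rewrite the dominating function
    have hgfun : (fun u : ℝ => l ^ 2 / Real.sqrt (2 * Real.pi * (s - u)))
        = fun u : ℝ => (l ^ 2 / Real.sqrt (2 * Real.pi)) * (Real.sqrt (s - u))⁻¹ := by
      funext u
      rw [Real.sqrt_mul (by positivity) (s - u), ← div_div, div_eq_mul_inv]
    have hg_int : IntervalIntegrable
        (fun u : ℝ => l ^ 2 / Real.sqrt (2 * Real.pi * (s - u))) volume 0 s := by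
      rw [hgfun]
      exact (sqrt_inv_intInt s hs).const_mul _
    have hg_val : (∫ u in (0:ℝ)..s, l ^ 2 / Real.sqrt (2 * Real.pi * (s - u)))
        = l ^ 2 * Real.sqrt (2 * s / Real.pi) := by
      rw [hgfun, intervalIntegral.integral_const_mul, sqrt_inv_int s hs]
      have h2π : (0:ℝ) < Real.sqrt (2 * Real.pi) := Real.sqrt_pos.2 (by positivity)
      have hmul : Real.sqrt (2 * s / Real.pi) * Real.sqrt (2 * Real.pi) = 2 * Real.sqrt s := by
        rw [← Real.sqrt_mul (by positivity)]
        have : 2 * s / Real.pi * (2 * Real.pi) = 4 * s := by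
          field_simp; ring
        rw [this, show (4:ℝ) * s = 2^2 * s by norm_num, Real.sqrt_mul (by norm_num),
          Real.sqrt_sq (by norm_num)]
      have hrw : Real.sqrt (2 * s / Real.pi) = 2 * Real.sqrt s / Real.sqrt (2 * Real.pi) := by
        rw [eq_div_iff h2π.ne']; exact hmul
      rw [hrw]; ring
    have hI : (∫ u in (0:ℝ)..s, (h u) ^ 2 / Real.sqrt (2 * Real.pi * (s - u)))
        ≤ l ^ 2 * Real.sqrt (2 * s / Real.pi) := by
      by_cases hint : IntervalIntegrable
          (fun u : ℝ => (h u) ^ 2 / Real.sqrt (2 * Real.pi * (s - u))) volume 0 s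
      · rw [← hg_val]
        refine intervalIntegral.integral_mono_on hs hint hg_int ?_
        intro u hu
        rw [div_eq_mul_inv, div_eq_mul_inv]
        exact mul_le_mul_of_nonneg_right
          (pow_le_pow_left₀ (hnn u hu.1) (hle u hu.1) 2)
          (inv_nonneg.2 (Real.sqrt_nonneg _))
      · rw [intervalIntegral.integral_undef hint]
        positivity
    have hhs := heq s hs
    have hls := hle s hs
    nlinarith [Real.sqrt_nonneg (2 * s / Real.pi)]
  -- conclude
  by_contra hcon
  push_neg at hcon
  set ε : ℝ := 1 - K * l ^ 2 with hε
  have hε0 : 0 < ε := by linarith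
  set c : ℝ := l / ε with hc
  have hc0 : 0 ≤ c := div_nonneg hl0 hε0.le
  have hs : (0:ℝ) ≤ Real.pi * (c ^ 2 + 1) / 2 := by positivity
  have hk := key _ hs
  have harg : 2 * (Real.pi * (c ^ 2 + 1) / 2) / Real.pi = c ^ 2 + 1 := by
    field_simp
  rw [harg] at hk
  have hlt : c < Real.sqrt (c ^ 2 + 1) := by
    have := Real.sqrt_lt_sqrt (sq_nonneg c) (by linarith : c ^ 2 < c ^ 2 + 1)
    rwa [Real.sqrt_sq hc0] at this
  have hlc : l = c * ε := by
    rw [hc]; field_simp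
  nlinarith
end

section
/- Let K > 0, let ν be a (Borel) measure on (0,∞) with ∫_0^∞ x ν(dx) < ∞, and let h : [0,∞) → [0,∞) satisfy both h(t) = √(2t/π) − K ∫_0^t h(u)²/√(2π(t−u)) du for all t ≥ 0 and K h(θ)² = 1 − ∫_0^∞ x e^{−θx} ν(dx) for all θ > 0. Then h(t) = (1/√(2πt)) ∫_0^∞ Q(tx) ν(dx) for all t > 0, where Q(w) = √w e^{−w} ∫_0^w e^y/√y dy. -/
open MeasureTheory Set Filter
open scoped ENNReal NNReal

noncomputable def Q (w : ℝ) : ℝ :=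
  Real.sqrt w * Real.exp (-w) * ∫ y in (0:ℝ)..w, Real.exp y / Real.sqrt y

-- global identity: (√y)⁻¹ = y ^ (-(1/2))
lemma inv_sqrt_eq_rpow (y : ℝ) : (Real.sqrt y)⁻¹ = y ^ (-(1/2) : ℝ) := by
  rcases le_or_gt 0 y with hy | hy
  · rw [Real.sqrt_eq_rpow, ← Real.rpow_neg hy]
  · rw [Real.sqrt_eq_zero'.mpr hy.le, inv_zero, Real.rpow_def_of_neg hy]
    rw [show -(1/2) * Real.pi = -(Real.pi/2) by ring, Real.cos_neg, Real.cos_pi_div_two, mul_zero]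

lemma sqrt_two_pi_mul (y : ℝ) :
    (Real.sqrt (2 * Real.pi * y))⁻¹ = (Real.sqrt (2 * Real.pi))⁻¹ * (Real.sqrt y)⁻¹ := by
  rw [Real.sqrt_mul (by positivity), mul_inv]

lemma c_intervalIntegrable (t : ℝ) :
    IntervalIntegrable (fun u => (Real.sqrt (2 * Real.pi * (t - u)))⁻¹) volume 0 t := by
  have hfe : (fun u : ℝ => (Real.sqrt (2 * Real.pi * (t - u)))⁻¹)
      = fun u => (Real.sqrt (2 * Real.pi))⁻¹ * ((t - u) ^ (-(1/2) : ℝ)) := by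
    funext u; rw [sqrt_two_pi_mul, inv_sqrt_eq_rpow (t - u)]
  rw [hfe]
  simpa using ((intervalIntegral.intervalIntegrable_rpow' (r := -(1/2)) (by norm_num) (a := t)
    (b := 0)).comp_sub_left t).const_mul ((Real.sqrt (2 * Real.pi))⁻¹)

lemma c_integral (t : ℝ) (ht : 0 < t) :
    ∫ u in (0:ℝ)..t, (Real.sqrt (2 * Real.pi * (t - u)))⁻¹ = Real.sqrt (2 * t / Real.pi) := by
  have hfe : ∀ u : ℝ, (Real.sqrt (2 * Real.pi * (t - u)))⁻¹
      = (Real.sqrt (2 * Real.pi))⁻¹ * ((t - u) ^ (-(1/2) : ℝ)) := by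
    intro u; rw [sqrt_two_pi_mul, inv_sqrt_eq_rpow (t - u)]
  simp only [hfe]
  rw [intervalIntegral.integral_const_mul]
  have key := intervalIntegral.integral_comp_sub_left (a := 0) (b := t)
    (fun y : ℝ => y ^ (-(1/2) : ℝ)) t
  simp only [sub_zero, sub_self] at key
  rw [key, integral_rpow (Or.inl (by norm_num))]
  have h0 : (0:ℝ) ^ ((-(1/2) : ℝ) + 1) = 0 := by
    rw [Real.zero_rpow (by norm_num)]
  rw [h0]
  have h1 : t ^ ((-(1/2) : ℝ) + 1) = Real.sqrt t := by
    norm_num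
    rw [Real.sqrt_eq_rpow]
  rw [h1]
  have hs2 : Real.sqrt 2 * Real.sqrt 2 = 2 := Real.mul_self_sqrt (by norm_num)
  have hsp : (0:ℝ) < Real.sqrt Real.pi := Real.sqrt_pos.mpr Real.pi_pos
  have hs2p : (0:ℝ) < Real.sqrt 2 := Real.sqrt_pos.mpr (by norm_num)
  rw [show 2 * Real.pi = 2 * Real.pi from rfl, Real.sqrt_mul (by norm_num : (0:ℝ) ≤ 2),
     show 2 * t / Real.pi = 2 * t / Real.pi from rfl, Real.sqrt_div' (2*t) Real.pi_pos.le,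
     Real.sqrt_mul (by norm_num : (0:ℝ) ≤ 2)]
  field_simp
  ring_nf
  rw [Real.sq_sqrt (by norm_num : (0:ℝ) ≤ 2)]

lemma inner_calc (t x : ℝ) (ht : 0 < t) (hx : 0 < x) :
    ∫ u in (0:ℝ)..t, x * Real.exp (-(u * x)) * (Real.sqrt (2 * Real.pi * (t - u)))⁻¹
      = Q (t * x) * (Real.sqrt (2 * Real.pi * t))⁻¹ := by
  have hsx : (0:ℝ) < Real.sqrt x := Real.sqrt_pos.mpr hx
  have hst : (0:ℝ) < Real.sqrt t := Real.sqrt_pos.mpr ht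
  have hs2p : (0:ℝ) < Real.sqrt (2 * Real.pi) := Real.sqrt_pos.mpr (by positivity)
  have step1 : ∀ u : ℝ, x * Real.exp (-(u * x)) * (Real.sqrt (2 * Real.pi * (t - u)))⁻¹
      = (x * (Real.sqrt (2 * Real.pi))⁻¹) * (Real.exp (-(u * x)) * (Real.sqrt (t - u))⁻¹) := by
    intro u; rw [sqrt_two_pi_mul]; ring
  simp only [step1]
  rw [intervalIntegral.integral_const_mul]
  have key := intervalIntegral.integral_comp_sub_left (a := 0) (b := t)
    (fun θ : ℝ => Real.exp (-((t - θ) * x)) * (Real.sqrt θ)⁻¹) t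
  simp only [sub_sub_cancel, sub_zero, sub_self] at key
  rw [key]
  have step3 : ∀ θ : ℝ, Real.exp (-((t - θ) * x)) * (Real.sqrt θ)⁻¹
      = Real.exp (-(t * x)) * (Real.exp (x * θ) * (Real.sqrt θ)⁻¹) := by
    intro θ
    rw [show -((t - θ) * x) = -(t * x) + x * θ by ring, Real.exp_add]
    ring
  simp only [step3]
  rw [intervalIntegral.integral_const_mul]
  have step4 : ∫ θ in (0:ℝ)..t, Real.exp (x * θ) * (Real.sqrt θ)⁻¹
      = ∫ θ in (0:ℝ)..t, Real.sqrt x * ((fun y => Real.exp y / Real.sqrt y) (x * θ)) := by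
    apply intervalIntegral.integral_congr
    intro θ hθ
    rw [uIcc_of_le ht.le] at hθ
    rcases eq_or_lt_of_le hθ.1 with h0 | h0
    · simp [← h0]
    · have hsθ : (0:ℝ) < Real.sqrt θ := Real.sqrt_pos.mpr h0
      simp only
      rw [Real.sqrt_mul hx.le]
      field_simp
  rw [step4, intervalIntegral.integral_const_mul,
    intervalIntegral.integral_comp_mul_left (fun y => Real.exp y / Real.sqrt y) (ne_of_gt hx),
    mul_zero]
  unfold Q
  rw [show x * t = t * x by ring, Real.sqrt_mul ht.le, sqrt_two_pi_mul, smul_eq_mul]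
  field_simp

lemma nu_Ioi_lt_top (ν : Measure ℝ) (hmom : ∫⁻ x in Ioi (0:ℝ), ENNReal.ofReal x ∂ν < ⊤)
    {a : ℝ} (ha : 0 < a) : ν (Ioi a) < ⊤ := by
  have h1 : ENNReal.ofReal a * ν (Ioi a) ≤ ∫⁻ x in Ioi (0:ℝ), ENNReal.ofReal x ∂ν := by
    calc ENNReal.ofReal a * ν (Ioi a) = ∫⁻ _ in Ioi a, ENNReal.ofReal a ∂ν := by
          rw [setLIntegral_const]
      _ ≤ ∫⁻ x in Ioi a, ENNReal.ofReal x ∂ν := by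
          refine setLIntegral_mono (by measurability) fun x hx => ?_
          exact ENNReal.ofReal_le_ofReal (le_of_lt hx)
      _ ≤ ∫⁻ x in Ioi (0:ℝ), ENNReal.ofReal x ∂ν :=
          lintegral_mono_set (Ioi_subset_Ioi ha.le)
  by_contra hcon
  rw [not_lt, top_le_iff] at hcon
  rw [hcon, ENNReal.mul_top (by simp [ha, ne_of_gt]), top_le_iff] at h1
  rw [h1] at hmom
  exact (lt_irrefl _ hmom)

lemma nu_sigmaFinite (ν : Measure ℝ) (hmom : ∫⁻ x in Ioi (0:ℝ), ENNReal.ofReal x ∂ν < ⊤) :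
    SigmaFinite (ν.restrict (Ioi 0)) := by
  refine ⟨⟨⟨fun n => Iic 0 ∪ Ioi (1 / (n + 1) : ℝ), fun _ => trivial, fun n => ?_, ?_⟩⟩⟩
  · have ha : (0:ℝ) < 1 / (n + 1) := by positivity
    have hm : MeasurableSet (Iic (0:ℝ) ∪ Ioi (1 / (n + 1) : ℝ)) :=
      measurableSet_Iic.union measurableSet_Ioi
    rw [Measure.restrict_apply hm]
    refine lt_of_le_of_lt (measure_mono ?_) (nu_Ioi_lt_top ν hmom ha)
    rintro y ⟨hy1 | hy1, hy2⟩
    · exact absurd (lt_of_lt_of_le hy2 (mem_Iic.mp hy1)) (lt_irrefl 0)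
    · exact hy1
  · ext y
    simp only [mem_iUnion, mem_union, mem_Iic, mem_Ioi, mem_univ, iff_true]
    rcases le_or_gt y 0 with hy | hy
    · exact ⟨0, Or.inl hy⟩
    · obtain ⟨n, hn⟩ := exists_nat_one_div_lt hy
      exact ⟨n, Or.inr hn⟩

lemma integrable_id_nu (ν : Measure ℝ) (hmom : ∫⁻ x in Ioi (0:ℝ), ENNReal.ofReal x ∂ν < ⊤) :
    Integrable (fun x : ℝ => x) (ν.restrict (Ioi 0)) := by
  refine ⟨measurable_id.aestronglyMeasurable, ?_⟩
  show (∫⁻ a, (‖a‖₊ : ℝ≥0∞) ∂(ν.restrict (Ioi 0))) < ⊤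
  have : ∀ᵐ x ∂(ν.restrict (Ioi 0)), (‖x‖₊ : ℝ≥0∞) = ENNReal.ofReal x := by
    filter_upwards [ae_restrict_mem measurableSet_Ioi] with x hx
    exact Real.enorm_eq_ofReal (le_of_lt hx)
  rwa [lintegral_congr_ae this]

set_option maxHeartbeats 1000000 in
theorem levy_measure_representation (K : ℝ) (hK : 0 < K)
    (ν : Measure ℝ) (hν : ν (Iic 0) = 0)
    (hmom : ∫⁻ x in Ioi (0:ℝ), ENNReal.ofReal x ∂ν < ⊤)
    (h : ℝ → ℝ) (hnn : ∀ t : ℝ, 0 ≤ t → 0 ≤ h t)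
    (heq1 : ∀ t : ℝ, 0 ≤ t →
      h t = Real.sqrt (2 * t / Real.pi)
        - K * ∫ u in (0:ℝ)..t, (h u) ^ 2 / Real.sqrt (2 * Real.pi * (t - u)))
    (heq2 : ∀ θ : ℝ, 0 < θ →
      K * (h θ) ^ 2 = 1 - ∫ x in Ioi (0:ℝ), x * Real.exp (-(θ * x)) ∂ν) :
    ∀ t : ℝ, 0 < t →
      h t = (1 / Real.sqrt (2 * Real.pi * t)) * ∫ x in Ioi (0:ℝ), Q (t * x) ∂ν := by
  intro t ht
  haveI : SigmaFinite (ν.restrict (Ioi 0)) := nu_sigmaFinite ν hmom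
  set c : ℝ → ℝ := fun u => (Real.sqrt (2 * Real.pi * (t - u)))⁻¹ with hcdef
  set g : ℝ → ℝ := fun u => ∫ x in Ioi (0:ℝ), x * Real.exp (-(u * x)) ∂ν with hgdef
  have hcm : Measurable c := by
    apply Measurable.inv
    exact (Real.continuous_sqrt.comp (by continuity)).measurable
  have hgm : StronglyMeasurable g := by
    have hcont : Continuous (fun p : ℝ × ℝ => p.2 * Real.exp (-(p.1 * p.2))) := by continuity
    exact hcont.stronglyMeasurable.integral_prod_right'
  have hg0 : ∀ u : ℝ, 0 < u → 0 ≤ g u := fun u hu =>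
    setIntegral_nonneg measurableSet_Ioi (fun x hx => mul_nonneg (le_of_lt hx) (Real.exp_pos _).le)
  have hg1 : ∀ u : ℝ, 0 < u → g u ≤ 1 := by
    intro u hu
    have h2 := heq2 u hu
    nlinarith [mul_nonneg hK.le (sq_nonneg (h u))]
  have hcnn : ∀ u, 0 ≤ c u := fun u => inv_nonneg.mpr (Real.sqrt_nonneg _)
  have hcii : IntervalIntegrable c volume 0 t := c_intervalIntegrable t
  have hcI : IntegrableOn c (Ioc 0 t) volume :=
    (intervalIntegrable_iff_integrableOn_Ioc_of_le ht.le).1 hcii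
  have hgcI : IntegrableOn (fun u => g u * c u) (Ioc 0 t) volume := by
    refine Integrable.mono hcI ((hgm.measurable.mul hcm).aestronglyMeasurable) ?_
    filter_upwards [ae_restrict_mem measurableSet_Ioc] with u hu
    have h0 := hg0 u hu.1
    have h1 := hg1 u hu.1
    rw [Real.norm_eq_abs, Real.norm_eq_abs, abs_of_nonneg (mul_nonneg h0 (hcnn u)),
      abs_of_nonneg (hcnn u)]
    calc g u * c u ≤ 1 * c u := mul_le_mul_of_nonneg_right h1 (hcnn u)
      _ = c u := one_mul _
  have hgcii : IntervalIntegrable (fun u => g u * c u) volume 0 t :=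
    (intervalIntegrable_iff_integrableOn_Ioc_of_le ht.le).2 hgcI
  -- Step 1 : h t = ∫ u in 0..t, g u * c u
  have key1 : h t = ∫ u in (0:ℝ)..t, g u * c u := by
    have e2 : (∫ u in (0:ℝ)..t, (h u) ^ 2 / Real.sqrt (2 * Real.pi * (t - u)))
        = ∫ u in (0:ℝ)..t, K⁻¹ * ((1 - g u) * c u) := by
      apply intervalIntegral.integral_congr_ae
      rw [uIoc_of_le ht.le]
      filter_upwards with u hu
      have h2 := heq2 u hu.1
      have : (h u) ^ 2 = K⁻¹ * (1 - g u) := by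
        field_simp
        linarith [h2]
      rw [div_eq_mul_inv, this, hcdef]
      ring
    have e3 : ∫ u in (0:ℝ)..t, (1 - g u) * c u
        = (∫ u in (0:ℝ)..t, c u) - ∫ u in (0:ℝ)..t, g u * c u := by
      rw [← intervalIntegral.integral_sub hcii hgcii]
      apply intervalIntegral.integral_congr
      intro u _
      ring
    rw [heq1 t ht.le, e2, intervalIntegral.integral_const_mul, e3, c_integral t ht]
    field_simp
    ring
  rw [key1, intervalIntegral.integral_of_le ht.le]
  -- Step 3 : push c inside the ν-integral
  have step3 : ∀ u : ℝ, g u * c u = ∫ x, (x * Real.exp (-(u * x)) * c u) ∂(ν.restrict (Ioi 0)) := by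
    intro u
    rw [hgdef]
    exact (integral_mul_const (c u) _).symm
  simp only [step3]
  -- Fubini
  have hFm : AEStronglyMeasurable (Function.uncurry fun u x => x * Real.exp (-(u * x)) * c u)
      ((volume.restrict (Ioc (0:ℝ) t)).prod (ν.restrict (Ioi 0))) := by
    apply Measurable.aestronglyMeasurable
    apply Measurable.mul
    · exact measurable_snd.mul (((measurable_fst.mul measurable_snd).neg).exp)
    · exact hcm.comp measurable_fst
  have hG : Integrable (fun z : ℝ × ℝ => c z.1 * z.2)
      ((volume.restrict (Ioc (0:ℝ) t)).prod (ν.restrict (Ioi 0))) :=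
    hcI.mul_prod (integrable_id_nu ν hmom)
  have hcompl : ((volume.restrict (Ioc (0:ℝ) t)).prod (ν.restrict (Ioi 0)))
      (((Ioc (0:ℝ) t) ×ˢ (Ioi (0:ℝ)))ᶜ) = 0 := by
    rw [Set.compl_prod_eq_union]
    refine le_antisymm (le_trans (measure_union_le _ _) ?_) (zero_le')
    have h1 : ((volume.restrict (Ioc (0:ℝ) t)).prod (ν.restrict (Ioi 0)))
        ((Ioc (0:ℝ) t)ᶜ ×ˢ (univ : Set ℝ)) = 0 := by
      rw [Measure.prod_prod, Measure.restrict_apply measurableSet_Ioc.compl]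
      simp
    have h2 : ((volume.restrict (Ioc (0:ℝ) t)).prod (ν.restrict (Ioi 0)))
        ((univ : Set ℝ) ×ˢ (Ioi (0:ℝ))ᶜ) = 0 := by
      rw [Measure.prod_prod, Measure.restrict_apply measurableSet_Ioi.compl,
        compl_inter_self, measure_empty, mul_zero]
    rw [h1, h2]
    exact le_of_eq (add_zero 0)
  have hmem : ∀ᵐ z ∂((volume.restrict (Ioc (0:ℝ) t)).prod (ν.restrict (Ioi 0))),
      z ∈ (Ioc (0:ℝ) t) ×ˢ (Ioi (0:ℝ)) := by
    rw [ae_iff]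
    exact hcompl
  have hF_int : Integrable (Function.uncurry fun u x => x * Real.exp (-(u * x)) * c u)
      ((volume.restrict (Ioc (0:ℝ) t)).prod (ν.restrict (Ioi 0))) := by
    refine Integrable.mono hG hFm ?_
    filter_upwards [hmem] with z hz
    obtain ⟨hz1, hz2⟩ := hz
    have he1 : Real.exp (-(z.1 * z.2)) ≤ 1 :=
      Real.exp_le_one_iff.mpr (by nlinarith [hz1.1, mem_Ioi.mp hz2])
    have hcz := hcnn z.1
    have hz2' : (0:ℝ) < z.2 := hz2
    show ‖z.2 * Real.exp (-(z.1 * z.2)) * c z.1‖ ≤ ‖c z.1 * z.2‖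
    rw [Real.norm_eq_abs, Real.norm_eq_abs, abs_of_nonneg (by positivity),
      abs_of_nonneg (by positivity)]
    calc z.2 * Real.exp (-(z.1 * z.2)) * c z.1
        ≤ z.2 * 1 * c z.1 :=
          mul_le_mul_of_nonneg_right (mul_le_mul_of_nonneg_left he1 hz2'.le) hcz
      _ = c z.1 * z.2 := by ring
  have swap := MeasureTheory.integral_integral_swap
    (f := fun u x => x * Real.exp (-(u * x)) * c u) hF_int
  rw [swap]
  have step5 : ∀ᵐ x ∂(ν.restrict (Ioi 0)),
      (∫ u in Ioc (0:ℝ) t, x * Real.exp (-(u * x)) * c u)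
        = Q (t * x) * (Real.sqrt (2 * Real.pi * t))⁻¹ := by
    filter_upwards [ae_restrict_mem measurableSet_Ioi] with x hx
    rw [← intervalIntegral.integral_of_le ht.le]
    exact inner_calc t x ht hx
  rw [integral_congr_ae step5, integral_mul_const, one_div]
  ring
end

section
/- Let K > 0 and let h : [0,∞) → [0,∞) be continuous and bounded with h(0) = 0, satisfying h(s) = √(2s/π) − K ∫_0^s h(u)²/√(2π(s−u)) du for all s ≥ 0. Assume h is differentiable on (0,∞), that its derivative satisfies h'(s) = 1/√(2πs) − 2K ∫_0^s h(s−u)h'(s−u)/√(2πu) du for all s > 0, and that s ↦ h(s)h'(s) is bounded on (0,1]. Then lim_{s→0⁺} h(s)h'(s) = 1/π. -/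
open MeasureTheory Set Filter

lemma aux_AA' (s : ℝ) (hs : 0 < s) :
    Real.sqrt (2*s/Real.pi) * (1/Real.sqrt (2*Real.pi*s)) = 1/Real.pi := by
  have hpi := Real.pi_pos
  rw [one_div, ← Real.sqrt_inv, ← Real.sqrt_mul (by positivity),
    show (2*s/Real.pi) * (2*Real.pi*s)⁻¹ = (1/Real.pi)^2 by
      field_simp,
    Real.sqrt_sq (by positivity)]

lemma aux_eqon (s : ℝ) :
    EqOn (fun u : ℝ => 1/Real.sqrt (2*Real.pi*u))
      (fun u : ℝ => (Real.sqrt (2*Real.pi))⁻¹ * u ^ (-(1/2) : ℝ)) (Icc 0 s) := by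
  intro u hu
  rcases eq_or_lt_of_le hu.1 with h0 | h0
  · simp [← h0, Real.zero_rpow (by norm_num : (-(1/2):ℝ) ≠ 0)]
  · have hpi := Real.pi_pos
    simp only [Real.sqrt_mul (by positivity : (0:ℝ) ≤ 2*Real.pi) u]
    rw [Real.rpow_neg h0.le, Real.sqrt_eq_rpow u, one_div, mul_inv]

lemma aux_intble (s : ℝ) (hs : 0 ≤ s) :
    IntervalIntegrable (fun u : ℝ => 1/Real.sqrt (2*Real.pi*u)) volume 0 s := by
  have := (intervalIntegral.intervalIntegrable_rpow' (a := 0) (b := s)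
    (by norm_num : (-1:ℝ) < -(1/2))).const_mul (Real.sqrt (2*Real.pi))⁻¹
  rw [intervalIntegrable_iff] at this ⊢
  exact (this.congr_fun (fun u hu => by
    have : u ∈ Icc 0 s := by
      rw [uIoc_of_le hs] at hu; exact ⟨hu.1.le, hu.2⟩
    exact (aux_eqon s this).symm) measurableSet_uIoc)

lemma aux_int (s : ℝ) (hs : 0 ≤ s) :
    ∫ u in (0:ℝ)..s, 1/Real.sqrt (2*Real.pi*u) = Real.sqrt (2*s/Real.pi) := by
  have hpi := Real.pi_pos
  rw [intervalIntegral.integral_congr (g := fun u : ℝ => (Real.sqrt (2*Real.pi))⁻¹ * u ^ (-(1/2) : ℝ))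
      (by rw [uIcc_of_le hs]; exact aux_eqon s),
    intervalIntegral.integral_const_mul,
    integral_rpow (Or.inl (by norm_num : (-1:ℝ) < -(1/2)))]
  have h2 : Real.sqrt (2*s/Real.pi) = (Real.sqrt (2*Real.pi))⁻¹ * (2 * Real.sqrt s) := by
    rw [show 2*s/Real.pi = ((Real.sqrt (2*Real.pi))⁻¹ * (2 * Real.sqrt s))^2 from ?_,
      Real.sqrt_sq (by positivity)]
    rw [mul_pow, mul_pow, inv_pow, Real.sq_sqrt (by positivity), Real.sq_sqrt hs]
    field_simp
  rw [h2, show (-(1/2) + 1 : ℝ) = 1/2 by norm_num, Real.zero_rpow (by norm_num : ((1:ℝ)/2) ≠ 0),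
    ← Real.sqrt_eq_rpow]
  ring

lemma aux_bound (s ε₁ : ℝ) (hs : 0 < s) (hε : 0 ≤ ε₁) (f : ℝ → ℝ)
    (hf : ∀ u ∈ Ioc (0:ℝ) s, |f u| ≤ ε₁) :
    |∫ u in (0:ℝ)..s, f u / Real.sqrt (2*Real.pi*u)| ≤ ε₁ * Real.sqrt (2*s/Real.pi) := by
  have hgi : IntervalIntegrable (fun u : ℝ => ε₁ * (1/Real.sqrt (2*Real.pi*u))) volume 0 s :=
    (aux_intble s hs.le).const_mul ε₁
  have hg : ∫ u in (0:ℝ)..s, ε₁ * (1/Real.sqrt (2*Real.pi*u)) = ε₁ * Real.sqrt (2*s/Real.pi) := by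
    rw [intervalIntegral.integral_const_mul, aux_int s hs.le]
  calc |∫ u in (0:ℝ)..s, f u / Real.sqrt (2*Real.pi*u)|
      ≤ |∫ u in (0:ℝ)..s, ε₁ * (1/Real.sqrt (2*Real.pi*u))| := by
        rw [← Real.norm_eq_abs]
        refine le_trans (intervalIntegral.norm_integral_le_of_norm_le hs.le ?_ hgi) (le_abs_self _)
        refine Eventually.of_forall fun t ht => ?_
        have h1 : (0:ℝ) ≤ Real.sqrt (2*Real.pi*t) := Real.sqrt_nonneg _
        rw [Real.norm_eq_abs, abs_div, abs_of_nonneg h1, mul_one_div]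
        rcases eq_or_lt_of_le h1 with hc | hc
        · rw [← hc]; simp
        · exact (div_le_div_iff_of_pos_right hc).mpr (hf t ht)
      _ = ε₁ * Real.sqrt (2*s/Real.pi) := by rw [hg, abs_of_nonneg (by positivity)]

lemma aux_bound_sub (s ε₁ : ℝ) (hs : 0 < s) (hε : 0 ≤ ε₁) (f : ℝ → ℝ)
    (hf : ∀ u ∈ Ico (0:ℝ) s, |f u| ≤ ε₁) :
    |∫ u in (0:ℝ)..s, f u / Real.sqrt (2*Real.pi*(s-u))| ≤ ε₁ * Real.sqrt (2*s/Real.pi) := by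
  have heqI : (∫ u in (0:ℝ)..s, f u / Real.sqrt (2*Real.pi*(s-u)))
      = ∫ u in (0:ℝ)..s, f (s-u) / Real.sqrt (2*Real.pi*u) := by
    have h2 := intervalIntegral.integral_comp_sub_left (a := (0:ℝ)) (b := s)
      (fun v => f (s - v) / Real.sqrt (2*Real.pi*v)) s
    simp only [sub_zero, sub_self] at h2
    rw [← h2]
    apply intervalIntegral.integral_congr
    intro u hu
    simp [sub_sub_cancel]
  rw [heqI]
  exact aux_bound s ε₁ hs hε _ (fun u hu => hf _ ⟨by linarith [hu.2], by linarith [hu.1]⟩)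

theorem hh'_limit (K : ℝ) (hK : 0 < K) (h h' : ℝ → ℝ)
    (hcont : ContinuousOn h (Ici 0))
    (hbdd : ∃ C : ℝ, ∀ s : ℝ, 0 ≤ s → |h s| ≤ C)
    (hnn : ∀ s : ℝ, 0 ≤ s → 0 ≤ h s)
    (h0 : h 0 = 0)
    (heq : ∀ s : ℝ, 0 ≤ s →
      h s = Real.sqrt (2 * s / Real.pi)
        - K * ∫ u in (0:ℝ)..s, (h u) ^ 2 / Real.sqrt (2 * Real.pi * (s - u)))
    (hderiv : ∀ s : ℝ, 0 < s → HasDerivAt h (h' s) s)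
    (hderiveq : ∀ s : ℝ, 0 < s →
      h' s = 1 / Real.sqrt (2 * Real.pi * s)
        - 2 * K * ∫ u in (0:ℝ)..s, h (s - u) * h' (s - u) / Real.sqrt (2 * Real.pi * u))
    (hprodbdd : ∃ C : ℝ, ∀ s ∈ Ioc (0:ℝ) 1, |h s * h' s| ≤ C) :
    Tendsto (fun s => h s * h' s) (nhdsWithin 0 (Ioi 0)) (nhds (1 / Real.pi)) := by
  obtain ⟨D, hD⟩ := hprodbdd
  have hD0 : 0 ≤ D := le_trans (abs_nonneg _) (hD 1 ⟨one_pos, le_refl 1⟩)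
  have hpi := Real.pi_pos
  rw [Metric.tendsto_nhdsWithin_nhds]
  intro ε hε
  set ε₁ : ℝ := ε * Real.pi / (2*K) with hε₁def
  have hε₁ : 0 < ε₁ := by positivity
  have hct : Tendsto h (nhdsWithin 0 (Ici 0)) (nhds 0) := by
    have := (hcont 0 self_mem_Ici).tendsto; rwa [h0] at this
  rw [Metric.tendsto_nhdsWithin_nhds] at hct
  obtain ⟨δ₁, hδ₁pos, hδ₁⟩ := hct (Real.sqrt ε₁) (Real.sqrt_pos.mpr hε₁)
  set c : ℝ := 2/Real.pi * (2*K*D + 2*K^2*ε₁*D) with hcdef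
  have hc0 : 0 ≤ c := by positivity
  refine ⟨min 1 (min δ₁ ((ε/2)/(c+1))), by positivity, fun {s} hs hdist => ?_⟩
  have hs0 : (0:ℝ) < s := hs
  rw [Real.dist_eq, sub_zero, abs_of_pos hs0] at hdist
  have hs1 : s ≤ 1 := le_of_lt (lt_of_lt_of_le hdist (min_le_left _ _))
  have hsδ₁ : s < δ₁ := lt_of_lt_of_le hdist ((min_le_right _ _).trans (min_le_left _ _))
  have hsε : s < (ε/2)/(c+1) := lt_of_lt_of_le hdist ((min_le_right _ _).trans (min_le_right _ _))
  set A : ℝ := Real.sqrt (2*s/Real.pi) with hAdef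
  set A' : ℝ := 1/Real.sqrt (2*Real.pi*s) with hA'def
  set B : ℝ := ∫ u in (0:ℝ)..s, (h u)^2 / Real.sqrt (2*Real.pi*(s-u)) with hBdef
  set C : ℝ := ∫ u in (0:ℝ)..s, h (s-u) * h' (s-u) / Real.sqrt (2*Real.pi*u) with hCdef
  have hAA' : A * A' = 1/Real.pi := aux_AA' s hs0
  have hA0 : 0 ≤ A := Real.sqrt_nonneg _
  have hA'0 : 0 ≤ A' := by positivity
  have hA2 : A * A = 2*s/Real.pi := Real.mul_self_sqrt (by positivity)
  have hhs : h s = A - K * B := heq s hs0.le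
  have hh's : h' s = A' - 2*K*C := hderiveq s hs0
  have hB : |B| ≤ ε₁ * A := by
    refine aux_bound_sub s ε₁ hs0 hε₁.le (fun u => (h u)^2) (fun u hu => ?_)
    have hu0 : (0:ℝ) ≤ u := hu.1
    have hdu : dist u 0 < δ₁ := by
      rw [Real.dist_eq, sub_zero, abs_of_nonneg hu0]; linarith [hu.2]
    have := hδ₁ hu0 hdu
    rw [Real.dist_eq, sub_zero] at this
    calc |(h u)^2| = |h u|^2 := by rw [abs_of_nonneg (sq_nonneg _), sq_abs]
      _ ≤ (Real.sqrt ε₁)^2 := by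
          apply pow_le_pow_left₀ (abs_nonneg _) this.le
      _ = ε₁ := Real.sq_sqrt hε₁.le
  have hC : |C| ≤ D * A := by
    refine aux_bound s D hs0 hD0 (fun u => h (s-u) * h' (s-u)) (fun u hu => ?_)
    rcases eq_or_lt_of_le (sub_nonneg.mpr hu.2) with he | hlt
    · show |h (s-u) * h' (s-u)| ≤ D
      rw [← he, h0]; simpa using hD0
    · exact hD _ ⟨hlt, by linarith [hu.1]⟩
  have key : h s * h' s - 1/Real.pi = -(2*K*A*C) + -(K*B*A') + 2*K^2*B*C := by
    rw [hhs, hh's, ← hAA']; ring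
  have b1 : |(-(2*K*A*C))| ≤ 2*K*D*(2*s/Real.pi) := by
    calc |(-(2*K*A*C))| = 2*K*A*|C| := by
          rw [abs_neg, abs_mul, abs_of_nonneg (by positivity : (0:ℝ) ≤ 2*K*A)]
      _ ≤ 2*K*A*(D*A) := mul_le_mul_of_nonneg_left hC (by positivity)
      _ = 2*K*D*(A*A) := by ring
      _ = 2*K*D*(2*s/Real.pi) := by rw [hA2]
  have b2 : |(-(K*B*A'))| ≤ ε/2 := by
    have : |(-(K*B*A'))| = K * |B| * A' := by
      rw [abs_neg, abs_mul, abs_mul, abs_of_nonneg hK.le, abs_of_nonneg hA'0]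
    rw [this]
    calc K * |B| * A' ≤ K*(ε₁*A)*A' := by
          apply mul_le_mul_of_nonneg_right _ hA'0
          exact mul_le_mul_of_nonneg_left hB hK.le
      _ = K*ε₁*(A*A') := by ring
      _ = K*ε₁*(1/Real.pi) := by rw [hAA']
      _ = ε/2 := by
          rw [hε₁def]; field_simp
  have b3 : |2*K^2*B*C| ≤ 2*K^2*ε₁*D*(2*s/Real.pi) := by
    calc |2*K^2*B*C| = 2*K^2 * |B| * |C| := by
          rw [abs_mul, abs_mul, abs_of_nonneg (by positivity : (0:ℝ) ≤ 2*K^2)]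
      _ ≤ 2*K^2*(ε₁*A)*(D*A) := by
          apply mul_le_mul (mul_le_mul_of_nonneg_left hB (by positivity)) hC (abs_nonneg _)
          positivity
      _ = 2*K^2*ε₁*D*(A*A) := by ring
      _ = 2*K^2*ε₁*D*(2*s/Real.pi) := by rw [hA2]
  have hsc : s*(c+1) < ε/2 := (lt_div_iff₀ (by positivity)).mp hsε
  have hce : 2*K*D*(2*s/Real.pi) + 2*K^2*ε₁*D*(2*s/Real.pi) = s*c := by
    rw [hcdef]; ring
  have htri : |h s * h' s - 1/Real.pi| ≤ |(-(2*K*A*C))| + |(-(K*B*A'))| + |2*K^2*B*C| := by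
    rw [key]
    exact le_trans (abs_add_le _ _) (add_le_add_left (abs_add_le _ _) _)
  rw [Real.dist_eq]
  have hsc' : s*c ≤ s*(c+1) := by nlinarith
  calc |h s * h' s - 1/Real.pi| ≤ |(-(2*K*A*C))| + |(-(K*B*A'))| + |2*K^2*B*C| := htri
    _ ≤ 2*K*D*(2*s/Real.pi) + ε/2 + 2*K^2*ε₁*D*(2*s/Real.pi) := by
        exact add_le_add (add_le_add b1 b2) b3
    _ < ε := by linarith
end

section
/- Let n ≥ 1, let φ_1, …, φ_n be nonnegative Schwartz functions on ℝ, let 0 ≤ t_1 < t_2 < ⋯ < t_n ≤ 1, and set ψ(y,t) = Σ_{k=1}^n φ_k(y) 1_{[0,t_k]}(t). Then for every x ∈ ℝ and s ∈ [0,1], lim_{T→∞} ∫_0^s (2πu)^{−1/2} (∫_ℝ e^{−(x−y)²/(2Tu)} ψ(y, 1−s+u) dy) du = Σ_{k=1}^n (∫_ℝ φ_k(y) dy) · ∫_0^s 1_{[0,t_k]}(1−u)/√(2π(s−u)) du. -/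
open MeasureTheory Set Filter

theorem free_term_limit (n : ℕ) (hn : 1 ≤ n)
    (φ : Fin n → SchwartzMap ℝ ℝ) (hφ : ∀ k (y : ℝ), 0 ≤ φ k y)
    (t : Fin n → ℝ) (ht0 : ∀ k, 0 ≤ t k) (ht1 : ∀ k, t k ≤ 1)
    (htmono : StrictMono t)
    (x s : ℝ) (hs : s ∈ Icc (0:ℝ) 1) :
    Tendsto (fun T : ℝ =>
        ∫ u in (0:ℝ)..s, (1 / Real.sqrt (2 * Real.pi * u)) *
          ∫ y : ℝ, Real.exp (-(x - y) ^ 2 / (2 * T * u)) *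
            (∑ k, φ k y * Set.indicator (Icc (0:ℝ) (t k)) (fun _ => (1:ℝ)) (1 - s + u)))
      atTop
      (nhds (∑ k, (∫ y : ℝ, φ k y) *
        ∫ u in (0:ℝ)..s,
          Set.indicator (Icc (0:ℝ) (t k)) (fun _ => (1:ℝ)) (1 - u)
            / Real.sqrt (2 * Real.pi * (s - u)))) := by
  obtain ⟨hs0, hs1⟩ := hs
  have huIoc : Set.uIoc (0:ℝ) s = Ioc 0 s := Set.uIoc_of_le hs0
  -- indicator facts
  have hind_nonneg : ∀ (a v : ℝ), 0 ≤ Set.indicator (Icc (0:ℝ) a) (fun _ => (1:ℝ)) v := by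
    intro a v
    by_cases h : v ∈ Icc (0:ℝ) a <;> simp [h]
  have hind_le_one : ∀ (a v : ℝ), Set.indicator (Icc (0:ℝ) a) (fun _ => (1:ℝ)) v ≤ 1 := by
    intro a v
    by_cases h : v ∈ Icc (0:ℝ) a <;> simp [h]
  -- integrability of the sqrt-inverse weight
  have hsqrt_int : IntervalIntegrable (fun u : ℝ => (Real.sqrt (2 * Real.pi * u))⁻¹)
      volume 0 s := by
    have hrpow : IntervalIntegrable (fun u : ℝ => (Real.sqrt (2 * Real.pi))⁻¹ * u ^ (-(1/2) : ℝ))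
        volume 0 s :=
      (intervalIntegral.intervalIntegrable_rpow' (by norm_num)).const_mul _
    refine hrpow.mono_fun' ?_ ?_
    · exact ((Real.continuous_sqrt.measurable.comp
        ((measurable_const.mul measurable_id'))).inv).aestronglyMeasurable
    · rw [huIoc]
      filter_upwards [ae_restrict_mem measurableSet_Ioc] with u hu
      have h1 : (0:ℝ) < u := hu.1
      have heq : (Real.sqrt (2 * Real.pi * u))⁻¹
          = (Real.sqrt (2 * Real.pi))⁻¹ * u ^ (-(1/2) : ℝ) := by
        rw [show (2 * Real.pi * u) = (2 * Real.pi) * u by ring,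
          Real.sqrt_mul (by positivity) u, mul_inv]
        congr 1
        rw [Real.sqrt_eq_rpow, ← Real.rpow_neg h1.le]
      rw [Real.norm_eq_abs, abs_of_nonneg (by positivity), heq]
  have hsqrt_meas : AEStronglyMeasurable (fun u : ℝ => (Real.sqrt (2 * Real.pi * u))⁻¹)
      (volume.restrict (Set.uIoc (0:ℝ) s)) :=
    ((Real.continuous_sqrt.measurable.comp
        ((measurable_const.mul measurable_id'))).inv).aestronglyMeasurable
  -- measurability of the indicators
  have hind_meas : ∀ k, Measurable (fun u : ℝ =>
      Set.indicator (Icc (0:ℝ) (t k)) (fun _ => (1:ℝ)) (1 - s + u)) := by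
    intro k
    exact (measurable_const.indicator measurableSet_Icc).comp (measurable_id'.const_add (1 - s))
  -- step A: change of variables in the RHS
  have hA : ∀ k : Fin n,
      (∫ u in (0:ℝ)..s, Set.indicator (Icc (0:ℝ) (t k)) (fun _ => (1:ℝ)) (1 - u)
        / Real.sqrt (2 * Real.pi * (s - u)))
      = ∫ u in (0:ℝ)..s, Set.indicator (Icc (0:ℝ) (t k)) (fun _ => (1:ℝ)) (1 - s + u)
        / Real.sqrt (2 * Real.pi * u) := by
    intro k
    have h := intervalIntegral.integral_comp_sub_left (a := (0:ℝ)) (b := s)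
      (fun v => Set.indicator (Icc (0:ℝ) (t k)) (fun _ => (1:ℝ)) (1 - s + v)
        / Real.sqrt (2 * Real.pi * v)) s
    rw [sub_self, sub_zero] at h
    rw [← h]
    apply intervalIntegral.integral_congr
    intro u hu
    have h1 : 1 - s + (s - u) = 1 - u := by ring
    simp only [h1]
  -- interval integrability of each RHS summand
  have hk_int : ∀ k : Fin n, IntervalIntegrable (fun u : ℝ =>
      Set.indicator (Icc (0:ℝ) (t k)) (fun _ => (1:ℝ)) (1 - s + u)
        / Real.sqrt (2 * Real.pi * u)) volume 0 s := by
    intro k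
    refine hsqrt_int.mono_fun' ?_ ?_
    · exact ((hind_meas k).div
        (Real.continuous_sqrt.measurable.comp (measurable_const.mul measurable_id'))).aestronglyMeasurable
    · filter_upwards with u
      rw [Real.norm_eq_abs, abs_div, abs_of_nonneg (hind_nonneg _ _),
        abs_of_nonneg (Real.sqrt_nonneg _), div_eq_mul_inv]
      calc Set.indicator (Icc (0:ℝ) (t k)) (fun _ => (1:ℝ)) (1 - s + u)
            * (Real.sqrt (2 * Real.pi * u))⁻¹
          ≤ 1 * (Real.sqrt (2 * Real.pi * u))⁻¹ := by
            apply mul_le_mul_of_nonneg_right (hind_le_one _ _) (by positivity)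
        _ = (Real.sqrt (2 * Real.pi * u))⁻¹ := one_mul _
  -- the limit function
  set L : ℝ → ℝ := fun u => (1 / Real.sqrt (2 * Real.pi * u)) *
      ∑ k, (∫ y, φ k y) * Set.indicator (Icc (0:ℝ) (t k)) (fun _ => (1:ℝ)) (1 - s + u) with hLdef
  -- RHS equals ∫ in 0..s of L
  have hRHS : (∑ k, (∫ y : ℝ, φ k y) *
        ∫ u in (0:ℝ)..s, Set.indicator (Icc (0:ℝ) (t k)) (fun _ => (1:ℝ)) (1 - u)
          / Real.sqrt (2 * Real.pi * (s - u)))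
      = ∫ u in (0:ℝ)..s, L u := by
    have h1 : ∀ k : Fin n, (∫ y : ℝ, φ k y) *
        (∫ u in (0:ℝ)..s, Set.indicator (Icc (0:ℝ) (t k)) (fun _ => (1:ℝ)) (1 - u)
          / Real.sqrt (2 * Real.pi * (s - u)))
        = ∫ u in (0:ℝ)..s, (∫ y : ℝ, φ k y) *
            (Set.indicator (Icc (0:ℝ) (t k)) (fun _ => (1:ℝ)) (1 - s + u)
              / Real.sqrt (2 * Real.pi * u)) := by
      intro k
      rw [hA k, intervalIntegral.integral_const_mul]
    rw [Finset.sum_congr rfl (fun k _ => h1 k),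
      ← intervalIntegral.integral_finset_sum (fun k _ => (hk_int k).const_mul _)]
    apply intervalIntegral.integral_congr
    intro u hu
    simp only [hLdef, Finset.mul_sum]
    refine Finset.sum_congr rfl fun k _ => ?_
    ring
  rw [hRHS]
  have hΦ_int : Integrable (fun y : ℝ => ∑ k, (φ k) y) :=
    integrable_finset_sum _ fun k _ => (φ k).integrable
  -- the norm bound on the inner integrand
  have hnorm_le : ∀ (T u : ℝ), 1 ≤ T → 0 < u → ∀ y : ℝ,
      ‖Real.exp (-(x - y) ^ 2 / (2 * T * u)) *
        (∑ k, (φ k) y * Set.indicator (Icc (0:ℝ) (t k)) (fun _ => (1:ℝ)) (1 - s + u))‖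
      ≤ ∑ k, (φ k) y := by
    intro T u hT hu0 y
    have hψnn : 0 ≤ ∑ k, (φ k) y * Set.indicator (Icc (0:ℝ) (t k)) (fun _ => (1:ℝ)) (1 - s + u) :=
      Finset.sum_nonneg fun k _ => mul_nonneg (hφ k y) (hind_nonneg _ _)
    have hden : (0:ℝ) < 2 * T * u := by nlinarith
    have hexp_le : Real.exp (-(x - y) ^ 2 / (2 * T * u)) ≤ 1 := by
      rw [Real.exp_le_one_iff]
      apply div_nonpos_of_nonpos_of_nonneg
      · simpa using sq_nonneg (x - y)
      · exact hden.le
    rw [norm_mul, Real.norm_eq_abs, Real.norm_eq_abs, Real.abs_exp, abs_of_nonneg hψnn]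
    calc Real.exp (-(x - y) ^ 2 / (2 * T * u)) *
          (∑ k, (φ k) y * Set.indicator (Icc (0:ℝ) (t k)) (fun _ => (1:ℝ)) (1 - s + u))
        ≤ 1 * (∑ k, (φ k) y * Set.indicator (Icc (0:ℝ) (t k)) (fun _ => (1:ℝ)) (1 - s + u)) :=
          mul_le_mul_of_nonneg_right hexp_le hψnn
      _ = ∑ k, (φ k) y * Set.indicator (Icc (0:ℝ) (t k)) (fun _ => (1:ℝ)) (1 - s + u) := one_mul _
      _ ≤ ∑ k, (φ k) y := by
          refine Finset.sum_le_sum fun k _ => ?_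
          calc (φ k) y * Set.indicator (Icc (0:ℝ) (t k)) (fun _ => (1:ℝ)) (1 - s + u)
              ≤ (φ k) y * 1 := mul_le_mul_of_nonneg_left (hind_le_one _ _) (hφ k y)
            _ = (φ k) y := mul_one _
  apply intervalIntegral.tendsto_integral_filter_of_dominated_convergence
    (bound := fun u : ℝ => (∫ y : ℝ, ∑ k, (φ k) y) * (Real.sqrt (2 * Real.pi * u))⁻¹)
  · -- measurability
    refine Eventually.of_forall fun T => ?_
    apply AEStronglyMeasurable.mul
    · exact ((measurable_const.div (Real.continuous_sqrt.measurable.comp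
        (measurable_const.mul measurable_id')))).aestronglyMeasurable
    · have hG : Measurable (fun p : ℝ × ℝ => Real.exp (-(x - p.2) ^ 2 / (2 * T * p.1)) *
          ∑ k, (φ k) p.2 * Set.indicator (Icc (0:ℝ) (t k)) (fun _ => (1:ℝ)) (1 - s + p.1)) := by
        apply Measurable.mul
        · exact Real.measurable_exp.comp
            ((((measurable_const.sub measurable_snd).pow_const 2).neg).div
              (measurable_const.mul measurable_fst))
        · exact Finset.measurable_sum _ fun k _ =>
            (((φ k).continuous.measurable).comp measurable_snd).mul
              ((measurable_const.indicator measurableSet_Icc).comp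
                (measurable_fst.const_add (1 - s)))
      exact hG.stronglyMeasurable.integral_prod_right'.aestronglyMeasurable.restrict
  · -- the bound
    filter_upwards [eventually_ge_atTop (1:ℝ)] with T hT
    refine Eventually.of_forall fun u hu' => ?_
    rw [huIoc] at hu'
    have hu0 : 0 < u := hu'.1
    have hsqrt_pos : 0 < Real.sqrt (2 * Real.pi * u) := Real.sqrt_pos.mpr (by positivity)
    have hIle : ‖∫ y : ℝ, Real.exp (-(x - y) ^ 2 / (2 * T * u)) *
        (∑ k, (φ k) y * Set.indicator (Icc (0:ℝ) (t k)) (fun _ => (1:ℝ)) (1 - s + u))‖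
        ≤ ∫ y : ℝ, ∑ k, (φ k) y :=
      norm_integral_le_of_norm_le hΦ_int (Eventually.of_forall (hnorm_le T u hT hu0))
    rw [norm_mul, Real.norm_eq_abs, abs_of_nonneg (by positivity : (0:ℝ) ≤ 1 / Real.sqrt (2 * Real.pi * u))]
    calc (1 / Real.sqrt (2 * Real.pi * u)) * ‖∫ y : ℝ, Real.exp (-(x - y) ^ 2 / (2 * T * u)) *
          (∑ k, (φ k) y * Set.indicator (Icc (0:ℝ) (t k)) (fun _ => (1:ℝ)) (1 - s + u))‖
        ≤ (1 / Real.sqrt (2 * Real.pi * u)) * ∫ y : ℝ, ∑ k, (φ k) y :=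
          mul_le_mul_of_nonneg_left hIle (by positivity)
      _ = (∫ y : ℝ, ∑ k, (φ k) y) * (Real.sqrt (2 * Real.pi * u))⁻¹ := by
          rw [one_div]; ring
  · -- integrability of the bound
    exact hsqrt_int.const_mul _
  · -- pointwise limit
    refine Eventually.of_forall fun u hu' => ?_
    rw [huIoc] at hu'
    have hu0 : 0 < u := hu'.1
    have hLu : L u = (1 / Real.sqrt (2 * Real.pi * u)) *
        ∫ y : ℝ, ∑ k, (φ k) y * Set.indicator (Icc (0:ℝ) (t k)) (fun _ => (1:ℝ)) (1 - s + u) := by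
      have h5 : (∫ y : ℝ, ∑ k, (φ k) y * Set.indicator (Icc (0:ℝ) (t k)) (fun _ => (1:ℝ)) (1 - s + u))
          = ∑ k, (∫ y : ℝ, (φ k) y) * Set.indicator (Icc (0:ℝ) (t k)) (fun _ => (1:ℝ)) (1 - s + u) := by
        rw [integral_finset_sum _ fun k _ => ((φ k).integrable).mul_const _]
        exact Finset.sum_congr rfl fun k _ => integral_mul_const _ _
      rw [h5]
    rw [hLu]
    apply Filter.Tendsto.const_mul
    apply MeasureTheory.tendsto_integral_filter_of_dominated_convergence
      (bound := fun y : ℝ => ∑ k, (φ k) y)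
    · refine Eventually.of_forall fun T => ?_
      apply Measurable.aestronglyMeasurable
      apply Measurable.mul
      · exact Real.measurable_exp.comp
          ((((measurable_const.sub measurable_id').pow_const 2).neg).div_const _)
      · exact Finset.measurable_sum _ fun k _ =>
          ((φ k).continuous.measurable).mul measurable_const
    · filter_upwards [eventually_ge_atTop (1:ℝ)] with T hT
      exact Eventually.of_forall (hnorm_le T u hT hu0)
    · exact hΦ_int
    · refine Eventually.of_forall fun y => ?_
      have h2 : Tendsto (fun T : ℝ => 2 * T * u) atTop atTop :=
        (tendsto_id.const_mul_atTop two_pos).atTop_mul_const hu0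
      have h3 : Tendsto (fun T : ℝ => -(x - y) ^ 2 / (2 * T * u)) atTop (nhds 0) :=
        tendsto_const_nhds.div_atTop h2
      have h4 := ((Real.continuous_exp.tendsto 0).comp h3).mul_const
        (∑ k, (φ k) y * Set.indicator (Icc (0:ℝ) (t k)) (fun _ => (1:ℝ)) (1 - s + u))
      simpa [Real.exp_zero] using h4
end

section
/- Let n ≥ 1, let φ_1, …, φ_n be nonnegative Schwartz functions on ℝ, let 0 ≤ t_1 < t_2 < ⋯ < t_n ≤ 1, and set ψ(y,t) = Σ_{k=1}^n φ_k(y) 1_{[0,t_k]}(t). Let p_s(x) = (2πs)^{−1/2} e^{−x²/(2s)}. Then for every x ∈ ℝ, lim_{T→∞} ∫_0^1 (∫_ℝ p_s(x − T^{−1/2} y) ψ(y,s) dy) ds = Σ_{k=1}^n (∫_0^{t_k} p_s(x) ds) · (∫_ℝ φ_k(y) dy). -/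
open MeasureTheory Set Filter

theorem leading_term_limit (n : ℕ) (hn : 1 ≤ n)
    (φ : Fin n → SchwartzMap ℝ ℝ) (hφ : ∀ k (y : ℝ), 0 ≤ φ k y)
    (t : Fin n → ℝ) (ht0 : ∀ k, 0 ≤ t k) (ht1 : ∀ k, t k ≤ 1)
    (htmono : StrictMono t) (x : ℝ) :
    Tendsto (fun T : ℝ =>
        ∫ s in (0:ℝ)..1, ∫ y : ℝ,
          (1 / Real.sqrt (2 * Real.pi * s)) *
            Real.exp (-(x - (Real.sqrt T)⁻¹ * y) ^ 2 / (2 * s)) *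
            (∑ k, φ k y * Set.indicator (Icc (0:ℝ) (t k)) (fun _ => (1:ℝ)) s))
      atTop
      (nhds (∑ k, (∫ s in (0:ℝ)..(t k),
          (1 / Real.sqrt (2 * Real.pi * s)) * Real.exp (-x ^ 2 / (2 * s))) *
        ∫ y : ℝ, φ k y)) := by
  classical
  set μ : Measure (ℝ × ℝ) := (volume.restrict (Ioc (0:ℝ) 1)).prod volume with hμdef
  set c : ℝ → ℝ := fun s => 1 / Real.sqrt (2 * Real.pi * s) with hcdef
  set ψ : ℝ × ℝ → ℝ :=
    fun z => ∑ k, φ k z.2 * Set.indicator (Icc (0:ℝ) (t k)) (fun _ => (1:ℝ)) z.1 with hψdef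
  set f : ℝ → ℝ × ℝ → ℝ := fun T z =>
    c z.1 * Real.exp (-(x - (Real.sqrt T)⁻¹ * z.2) ^ 2 / (2 * z.1)) * ψ z with hfdef
  set g : ℝ × ℝ → ℝ := fun z => c z.1 * Real.exp (-x ^ 2 / (2 * z.1)) * ψ z with hgdef
  set h : ℝ × ℝ → ℝ := fun z => c z.1 * ψ z with hhdef
  -- basic measurability
  have hcmeas : Measurable c := by
    apply Measurable.div measurable_const
    exact Real.continuous_sqrt.measurable.comp (measurable_id.const_mul (2 * Real.pi))
  have hindmeas : ∀ k, Measurable fun s : ℝ =>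
      Set.indicator (Icc (0:ℝ) (t k)) (fun _ => (1:ℝ)) s := fun k =>
    measurable_const.indicator measurableSet_Icc
  have hψmeas : Measurable ψ := by
    apply Finset.measurable_sum
    intro k _
    exact ((φ k).continuous.measurable.comp measurable_snd).mul
      ((hindmeas k).comp measurable_fst)
  have hexpmeas : ∀ T : ℝ, Measurable fun z : ℝ × ℝ =>
      Real.exp (-(x - (Real.sqrt T)⁻¹ * z.2) ^ 2 / (2 * z.1)) := by
    intro T
    apply Real.continuous_exp.measurable.comp
    apply Measurable.div
    · exact ((measurable_const.sub (measurable_snd.const_mul _)).pow measurable_const).neg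
    · exact measurable_fst.const_mul 2
  have hfmeas : ∀ T : ℝ, Measurable (f T) := fun T =>
    (((hcmeas.comp measurable_fst).mul (hexpmeas T)).mul hψmeas)
  have hgmeas : Measurable g := by
    apply Measurable.mul _ hψmeas
    apply (hcmeas.comp measurable_fst).mul
    apply Real.continuous_exp.measurable.comp
    exact measurable_const.div (measurable_fst.const_mul 2)
  -- a.e. the first coordinate is in (0,1]
  have hs_pos : ∀ᵐ z ∂μ, z.1 ∈ Ioc (0:ℝ) 1 := by
    rw [ae_iff]
    have hset : {z : ℝ × ℝ | ¬ z.1 ∈ Ioc (0:ℝ) 1} = (Ioc (0:ℝ) 1)ᶜ ×ˢ (univ : Set ℝ) := by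
      ext z; simp
    rw [hμdef, hset, Measure.prod_prod, Measure.restrict_apply measurableSet_Ioc.compl]
    simp
  -- nonnegativity of ψ and c
  have hψnonneg : ∀ z, 0 ≤ ψ z := by
    intro z
    apply Finset.sum_nonneg
    intro k _
    exact mul_nonneg (hφ k z.2) (Set.indicator_nonneg (fun _ _ => zero_le_one) _)
  have hcnonneg : ∀ s, 0 ≤ c s := fun s =>
    div_nonneg zero_le_one (Real.sqrt_nonneg _)
  -- pointwise bound
  have hbound : ∀ T : ℝ, ∀ z : ℝ × ℝ, z.1 ∈ Ioc (0:ℝ) 1 → ‖f T z‖ ≤ h z := by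
    intro T z hz
    have hexp : Real.exp (-(x - (Real.sqrt T)⁻¹ * z.2) ^ 2 / (2 * z.1)) ≤ 1 := by
      apply Real.exp_le_one_iff.2
      apply div_nonpos_of_nonpos_of_nonneg
      · simpa using sq_nonneg (x - (Real.sqrt T)⁻¹ * z.2)
      · linarith [hz.1]
    have h0 : 0 ≤ f T z :=
      mul_nonneg (mul_nonneg (hcnonneg _) (Real.exp_pos _).le) (hψnonneg z)
    rw [Real.norm_eq_abs, abs_of_nonneg h0]
    calc c z.1 * Real.exp (-(x - (Real.sqrt T)⁻¹ * z.2) ^ 2 / (2 * z.1)) * ψ z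
        ≤ c z.1 * 1 * ψ z := by
          apply mul_le_mul_of_nonneg_right _ (hψnonneg z)
          exact mul_le_mul_of_nonneg_left hexp (hcnonneg _)
      _ = h z := by ring
  have hboundg : ∀ z : ℝ × ℝ, z.1 ∈ Ioc (0:ℝ) 1 → ‖g z‖ ≤ h z := by
    intro z hz
    have hexp : Real.exp (-x ^ 2 / (2 * z.1)) ≤ 1 := by
      apply Real.exp_le_one_iff.2
      apply div_nonpos_of_nonpos_of_nonneg
      · simpa using sq_nonneg x
      · linarith [hz.1]
    have h0 : 0 ≤ g z :=
      mul_nonneg (mul_nonneg (hcnonneg _) (Real.exp_pos _).le) (hψnonneg z)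
    rw [Real.norm_eq_abs, abs_of_nonneg h0]
    calc c z.1 * Real.exp (-x ^ 2 / (2 * z.1)) * ψ z
        ≤ c z.1 * 1 * ψ z := by
          apply mul_le_mul_of_nonneg_right _ (hψnonneg z)
          exact mul_le_mul_of_nonneg_left hexp (hcnonneg _)
      _ = h z := by ring
  -- integrability of c on (0,1]
  have hcint : IntegrableOn c (Ioc (0:ℝ) 1) volume := by
    have h1 : IntegrableOn (fun s : ℝ => (Real.sqrt (2 * Real.pi))⁻¹ * s ^ (-(1/2) : ℝ))
        (Ioc (0:ℝ) 1) volume :=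
      ((intervalIntegral.intervalIntegrable_rpow' (r := (-(1/2) : ℝ)) (by norm_num)).const_mul
        (Real.sqrt (2 * Real.pi))⁻¹).1
    apply h1.congr_fun _ measurableSet_Ioc
    intro s hs
    have hπ : (0:ℝ) ≤ 2 * Real.pi := by positivity
    show (Real.sqrt (2 * Real.pi))⁻¹ * s ^ (-(1/2) : ℝ) = c s
    have hrp : (s : ℝ) ^ (-(1/2) : ℝ) = (Real.sqrt s)⁻¹ := by
      rw [Real.rpow_neg hs.1.le, Real.sqrt_eq_rpow]
    rw [hcdef]
    simp only
    rw [Real.sqrt_mul hπ, hrp, one_div, mul_inv]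
  have hcint' : Integrable c (volume.restrict (Ioc (0:ℝ) 1)) := hcint
  -- integrability of the bound h
  have hq_int : ∀ k, Integrable
      (fun s : ℝ => c s * Set.indicator (Icc (0:ℝ) (t k)) (fun _ => (1:ℝ)) s)
      (volume.restrict (Ioc (0:ℝ) 1)) := by
    intro k
    apply hcint'.mono ((hcmeas.mul (hindmeas k)).aestronglyMeasurable)
    apply Eventually.of_forall
    intro s
    rw [Real.norm_eq_abs, Real.norm_eq_abs]
    rw [Pi.mul_apply, abs_mul]
    have hind0 : |Set.indicator (Icc (0:ℝ) (t k)) (fun _ => (1:ℝ)) s| ≤ 1 := by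
      by_cases hs : s ∈ Icc (0:ℝ) (t k) <;> simp [hs]
    calc |c s| * |Set.indicator (Icc (0:ℝ) (t k)) (fun _ => (1:ℝ)) s|
        ≤ |c s| * 1 := mul_le_mul_of_nonneg_left hind0 (abs_nonneg _)
      _ = |c s| := mul_one _
  have hh_eq : h = fun z : ℝ × ℝ => ∑ k,
      (c z.1 * Set.indicator (Icc (0:ℝ) (t k)) (fun _ => (1:ℝ)) z.1) * φ k z.2 := by
    funext z
    rw [hhdef]
    simp only [hψdef, Finset.mul_sum]
    apply Finset.sum_congr rfl
    intro k _
    ring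
  have hh_int : Integrable h μ := by
    rw [hh_eq]
    apply integrable_finset_sum
    intro k _
    exact Integrable.mul_prod (hq_int k) ((φ k).integrable)
  -- integrability of f T and g
  have hf_int : ∀ T : ℝ, Integrable (f T) μ := by
    intro T
    apply hh_int.mono ((hfmeas T).aestronglyMeasurable)
    filter_upwards [hs_pos] with z hz
    calc ‖f T z‖ ≤ h z := hbound T z hz
      _ ≤ ‖h z‖ := le_abs_self _
  have hg_int : Integrable g μ := by
    apply hh_int.mono (hgmeas.aestronglyMeasurable)
    filter_upwards [hs_pos] with z hz
    calc ‖g z‖ ≤ h z := hboundg z hz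
      _ ≤ ‖h z‖ := le_abs_self _
  -- rewrite the iterated integral as a product integral
  have hLHS : ∀ T : ℝ, (∫ s in (0:ℝ)..1, ∫ y : ℝ,
      (1 / Real.sqrt (2 * Real.pi * s)) *
        Real.exp (-(x - (Real.sqrt T)⁻¹ * y) ^ 2 / (2 * s)) *
        (∑ k, φ k y * Set.indicator (Icc (0:ℝ) (t k)) (fun _ => (1:ℝ)) s))
      = ∫ z, f T z ∂μ := by
    intro T
    rw [intervalIntegral.integral_of_le zero_le_one]
    exact integral_integral (hf_int T)
  -- pointwise limit
  have hlim : ∀ᵐ z ∂μ, Tendsto (fun T : ℝ => f T z) atTop (nhds (g z)) := by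
    filter_upwards [hs_pos] with z _
    have hsqrt : Tendsto Real.sqrt atTop atTop := by
      apply tendsto_atTop_atTop_of_monotone (fun a b hab => Real.sqrt_le_sqrt hab)
      intro b
      exact ⟨(max b 0) ^ 2, by
        rw [Real.sqrt_sq (le_max_right b 0)]; exact le_max_left _ _⟩
    have hε : Tendsto (fun T : ℝ => (Real.sqrt T)⁻¹) atTop (nhds 0) :=
      hsqrt.inv_tendsto_atTop
    have hcont : Continuous fun u : ℝ =>
        c z.1 * Real.exp (-(x - u * z.2) ^ 2 / (2 * z.1)) * ψ z := by
      apply Continuous.mul _ continuous_const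
      apply continuous_const.mul
      apply Real.continuous_exp.comp
      exact (((continuous_const.sub (continuous_id.mul continuous_const)).pow 2).neg).div_const _
    have := (hcont.tendsto 0).comp hε
    simpa [hfdef, hgdef, Function.comp_def] using this
  -- dominated convergence
  have hmain : Tendsto (fun T : ℝ => ∫ z, f T z ∂μ) atTop (nhds (∫ z, g z ∂μ)) := by
    apply tendsto_integral_filter_of_dominated_convergence h
      (Eventually.of_forall fun T => (hfmeas T).aestronglyMeasurable)
      (Eventually.of_forall fun T => ?_) hh_int hlim
    filter_upwards [hs_pos] with z hz
    exact hbound T z hz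
  -- compute the limit integral
  have hg_eq : g = fun z : ℝ × ℝ => ∑ k,
      (c z.1 * Real.exp (-x ^ 2 / (2 * z.1)) *
        Set.indicator (Icc (0:ℝ) (t k)) (fun _ => (1:ℝ)) z.1) * φ k z.2 := by
    funext z
    rw [hgdef]
    simp only [hψdef, Finset.mul_sum]
    apply Finset.sum_congr rfl
    intro k _
    ring
  have hqk_int : ∀ k, Integrable
      (fun s : ℝ => c s * Real.exp (-x ^ 2 / (2 * s)) *
        Set.indicator (Icc (0:ℝ) (t k)) (fun _ => (1:ℝ)) s)
      (volume.restrict (Ioc (0:ℝ) 1)) := by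
    intro k
    have hm : Measurable fun s : ℝ => c s * Real.exp (-x ^ 2 / (2 * s)) *
        Set.indicator (Icc (0:ℝ) (t k)) (fun _ => (1:ℝ)) s := by
      apply Measurable.mul _ (hindmeas k)
      apply hcmeas.mul
      apply Real.continuous_exp.measurable.comp
      exact measurable_const.div (measurable_id.const_mul 2)
    apply hcint'.mono hm.aestronglyMeasurable
    filter_upwards [ae_restrict_mem measurableSet_Ioc] with s hs
    have hexp : Real.exp (-x ^ 2 / (2 * s)) ≤ 1 := by
      apply Real.exp_le_one_iff.2
      apply div_nonpos_of_nonpos_of_nonneg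
      · simpa using sq_nonneg x
      · linarith [hs.1]
    have hind0 : |Set.indicator (Icc (0:ℝ) (t k)) (fun _ => (1:ℝ)) s| ≤ 1 := by
      by_cases hmem : s ∈ Icc (0:ℝ) (t k) <;> simp [hmem]
    rw [Real.norm_eq_abs, Real.norm_eq_abs, abs_mul, abs_mul]
    calc |c s| * |Real.exp (-x ^ 2 / (2 * s))| * |Set.indicator (Icc (0:ℝ) (t k)) (fun _ => (1:ℝ)) s|
        ≤ |c s| * 1 * 1 := by
          apply mul_le_mul _ hind0 (abs_nonneg _) (by positivity)
          apply mul_le_mul_of_nonneg_left _ (abs_nonneg _)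
          rw [abs_of_pos (Real.exp_pos _)]
          exact hexp
      _ = |c s| := by ring
  have hIoc_inter : ∀ k, Icc (0:ℝ) (t k) ∩ Ioc (0:ℝ) 1 = Ioc (0:ℝ) (t k) := by
    intro k
    ext u
    simp only [mem_inter_iff, mem_Icc, mem_Ioc]
    constructor
    · rintro ⟨⟨h1, h2⟩, h3, h4⟩
      exact ⟨h3, h2⟩
    · rintro ⟨h1, h2⟩
      exact ⟨⟨h1.le, h2⟩, h1, h2.trans (ht1 k)⟩
  have hgint_eq : (∫ z, g z ∂μ) = ∑ k, (∫ s in (0:ℝ)..(t k),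
      (1 / Real.sqrt (2 * Real.pi * s)) * Real.exp (-x ^ 2 / (2 * s))) * ∫ y : ℝ, φ k y := by
    rw [hg_eq]
    rw [integral_finset_sum _ (fun k _ => Integrable.mul_prod (hqk_int k) ((φ k).integrable))]
    apply Finset.sum_congr rfl
    intro k _
    have hpm := integral_prod_mul (μ := volume.restrict (Ioc (0:ℝ) 1)) (ν := (volume : Measure ℝ))
      (fun s : ℝ => c s * Real.exp (-x ^ 2 / (2 * s)) *
        Set.indicator (Icc (0:ℝ) (t k)) (fun _ => (1:ℝ)) s)
      (fun y : ℝ => φ k y)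
    rw [hpm]
    congr 1
    have hind_eq : (fun s : ℝ => c s * Real.exp (-x ^ 2 / (2 * s)) *
        Set.indicator (Icc (0:ℝ) (t k)) (fun _ => (1:ℝ)) s)
        = Set.indicator (Icc (0:ℝ) (t k))
          (fun s => c s * Real.exp (-x ^ 2 / (2 * s))) := by
      funext s
      by_cases hmem : s ∈ Icc (0:ℝ) (t k) <;> simp [hmem]
    rw [hind_eq, integral_indicator measurableSet_Icc,
      Measure.restrict_restrict measurableSet_Icc, hIoc_inter k,
      intervalIntegral.integral_of_le (ht0 k)]
  rw [← hgint_eq]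
  have : (fun T : ℝ => ∫ s in (0:ℝ)..1, ∫ y : ℝ,
      (1 / Real.sqrt (2 * Real.pi * s)) *
        Real.exp (-(x - (Real.sqrt T)⁻¹ * y) ^ 2 / (2 * s)) *
        (∑ k, φ k y * Set.indicator (Icc (0:ℝ) (t k)) (fun _ => (1:ℝ)) s))
      = fun T : ℝ => ∫ z, f T z ∂μ := funext hLHS
  rw [this]
  exact hmain
end
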